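/- arXiv:1910.03511 — 7 statements merged into one kernel-verified Lean document; each statement's English description precedes it below -/
import Mathlib

section
/- For any face F of 𝒜, the set {R region of 𝒜 : F ⊆ R} is a nonempty interval of the poset of regions PR(𝒜,B): there exist regions m_F and M_F with m_F ≤ M_F such that {R : F ⊆ R} = {R : m_F ≤ R ≤ M_F}. Moreover F equals the intersection of all regions R with m_F ≤ R ≤ M_F. -/
open scoped RealInnerProductSpace Pointwise

variable {V : Type*} [NormedAddCommGroup V] [InnerProductSpace ℝ V] [FiniteDimensional ℝ V]
  {ι : Type*} [Fintype ι]

/-- The (open) complement of the union of the hyperplanes with chosen normals `e i`. -/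
def arrComplement (e : ι → V) : Set V := {v | ∀ i, ⟪e i, v⟫ ≠ 0}

/-- A region of the arrangement: the closure of a connected component of the complement
of the union of the hyperplanes. -/
def IsRegion (e : ι → V) (R : Set V) : Prop :=
  ∃ x ∈ arrComplement e, R = closure (connectedComponentIn (arrComplement e) x)

/-- The positive closed half-space bounded by the hyperplane with normal `e i`. -/
def posHalf (e : ι → V) (i : ι) : Set V := {v | 0 ≤ ⟪e i, v⟫}

/-- The negative closed half-space bounded by the hyperplane with normal `e i`. -/
def negHalf (e : ι → V) (i : ι) : Set V := {v | ⟪e i, v⟫ ≤ 0}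

/-- The separation set of two regions: the (indices of) hyperplanes such that the two
regions lie in opposite closed half-spaces. -/
def sepSet (e : ι → V) (R R' : Set V) : Set ι :=
  {i | (R ⊆ posHalf e i ∧ R' ⊆ negHalf e i) ∨ (R ⊆ negHalf e i ∧ R' ⊆ posHalf e i)}

/-- The order of the poset of regions `PR(𝒜,B)`. -/
def PRle (e : ι → V) (B R R' : Set V) : Prop := sepSet e B R ⊆ sepSet e B R'

/-- Strict order of the poset of regions. -/
def PRlt (e : ι → V) (B R R' : Set V) : Prop := PRle e B R R' ∧ R ≠ R'

/-- Cover relation in the poset of regions. -/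
def PRcover (e : ι → V) (B R R' : Set V) : Prop :=
  PRlt e B R R' ∧ ¬ ∃ U, IsRegion e U ∧ PRlt e B R U ∧ PRlt e B U R'

/-- A face of the arrangement: an intersection of a nonempty collection of regions. -/
def IsFace (e : ι → V) (F : Set V) : Prop :=
  ∃ Rs : Set (Set V), Rs.Nonempty ∧ (∀ R ∈ Rs, IsRegion e R) ∧ F = ⋂₀ Rs

/-- `[m, M]` is the facial interval of the face `F` in the poset of regions:
the regions containing `F` are exactly those between `m` and `M`. -/
def IsFacialInterval (e : ι → V) (B F m M : Set V) : Prop :=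
  IsRegion e m ∧ IsRegion e M ∧
    ∀ R, IsRegion e R → (F ⊆ R ↔ (PRle e B m R ∧ PRle e B R M))

/-- The facial weak order `FW(𝒜,B)`: `F ≤ G` iff `m_F ≤ m_G` and `M_F ≤ M_G`
in the poset of regions. -/
def FWle (e : ι → V) (B F G : Set V) : Prop :=
  ∃ mF MF mG MG, IsFacialInterval e B F mF MF ∧ IsFacialInterval e B G mG MG ∧
    PRle e B mF mG ∧ PRle e B MF MG

/-- Strict facial weak order. -/
def FWlt (e : ι → V) (B F G : Set V) : Prop := FWle e B F G ∧ F ≠ G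

/-- Cover relation in the facial weak order. -/
def FWcover (e : ι → V) (B F G : Set V) : Prop :=
  FWlt e B F G ∧ ¬ ∃ X, IsFace e X ∧ FWlt e B F X ∧ FWlt e B X G

/-- Two faces have the same maximal region `M` of their facial intervals. -/
def SameMax (e : ι → V) (B F G : Set V) : Prop :=
  ∃ m m' M, IsFacialInterval e B F m M ∧ IsFacialInterval e B G m' M

/-- Two faces have the same minimal region `m` of their facial intervals. -/
def SameMin (e : ι → V) (B F G : Set V) : Prop :=
  ∃ m M M', IsFacialInterval e B F m M ∧ IsFacialInterval e B G m M'

/-- The dimension of a face: the dimension of its linear span. -/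
noncomputable def fdim (F : Set V) : ℕ := Module.finrank ℝ (Submodule.span ℝ F)

open Classical in
/-- The covector (sign vector) of a face: the sign of `⟪e i, x⟫` for `x` in the
relative interior of the face. -/
noncomputable def covec (e : ι → V) (F : Set V) (i : ι) : SignType :=
  if ∀ x ∈ intrinsicInterior ℝ F, 0 < ⟪e i, x⟫ then 1
  else if ∀ x ∈ intrinsicInterior ℝ F, ⟪e i, x⟫ < 0 then -1
  else 0

/-- Composition of sign vectors. -/
def scomp (f g : ι → SignType) (i : ι) : SignType := if f i ≠ 0 then f i else g i

/-- The set of roots of the arrangement: the chosen normals and their opposites. -/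
def roots (e : ι → V) : Set V := Set.range e ∪ Set.range (fun i => -(e i))

/-- The root inversion set of a face. -/
def rootInv (e : ι → V) (F : Set V) : Set V :=
  {v ∈ roots e | ∃ x ∈ intrinsicInterior ℝ F, ⟪x, v⟫ ≤ 0}

/-- `H i` is a wall of the region `R`. -/
noncomputable def IsWall (e : ι → V) (R : Set V) (i : ι) : Prop :=
  fdim ({v : V | ⟪e i, v⟫ = 0} ∩ R) = Module.finrank ℝ V - 1

/-- A region is simplicial when the normal vectors of its walls are linearly independent. -/
def IsSimplicialRegion (e : ι → V) (R : Set V) : Prop :=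
  LinearIndependent ℝ (fun i : {i : ι // IsWall e R i} => e i.1)

/-- The arrangement is simplicial when all its regions are. -/
def IsSimplicial (e : ι → V) : Prop := ∀ R, IsRegion e R → IsSimplicialRegion e R

/-- The arrangement is essential when the intersection of all its hyperplanes is `{0}`. -/
def IsEssential (e : ι → V) : Prop := (⋂ i, {v : V | ⟪e i, v⟫ = 0}) = ({0} : Set V)

/-- The poset of regions is a lattice: any two regions have a join and a meet. -/
def PRIsLattice (e : ι → V) (B : Set V) : Prop :=
  ∀ R R', IsRegion e R → IsRegion e R' →
    (∃ J, IsRegion e J ∧ PRle e B R J ∧ PRle e B R' J ∧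
      ∀ U, IsRegion e U → PRle e B R U → PRle e B R' U → PRle e B J U) ∧
    (∃ M, IsRegion e M ∧ PRle e B M R ∧ PRle e B M R' ∧
      ∀ U, IsRegion e U → PRle e B U R → PRle e B U R' → PRle e B U M)



/-- The open cell with sign vector `s`. -/
def acell (e : ι → V) (s : ι → ℝ) : Set V := {v | ∀ i, 0 < s i * ⟪e i, v⟫}

/-- The closed region with sign vector `s`. -/
def arg (e : ι → V) (s : ι → ℝ) : Set V := {v | ∀ i, 0 ≤ s i * ⟪e i, v⟫}

/-- A `±1` sign vector. -/
def apm (s : ι → ℝ) : Prop := ∀ i, s i = 1 ∨ s i = -1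

lemma apm.ne_zero {s : ι → ℝ} (hs : apm s) (i : ι) : s i ≠ 0 := by
  rcases hs i with h | h <;> rw [h] <;> norm_num

lemma acell_subset_arg {e : ι → V} {s : ι → ℝ} : acell e s ⊆ arg e s :=
  fun v hv i => (hv i).le

lemma acell_subset_compl {e : ι → V} {s : ι → ℝ} : acell e s ⊆ arrComplement e := by
  intro v hv i h0
  have := hv i
  rw [h0, mul_zero] at this
  exact lt_irrefl 0 this

lemma alin (e : ι → V) (s : ι → ℝ) (i : ι) :
    IsLinearMap ℝ (fun v : V => s i * ⟪e i, v⟫) := by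
  constructor
  · intro a b; rw [inner_add_right]; ring
  · intro c a; rw [real_inner_smul_right, smul_eq_mul]; ring

lemma acell_convex (e : ι → V) (s : ι → ℝ) : Convex ℝ (acell e s) := by
  have h : acell e s = ⋂ i, {v : V | 0 < s i * ⟪e i, v⟫} := by
    ext v; simp [acell, Set.mem_iInter]
  rw [h]
  exact convex_iInter fun i => convex_halfSpace_gt (alin e s i) 0

lemma acell_cont (e : ι → V) (s : ι → ℝ) (i : ι) :
    Continuous (fun v : V => s i * ⟪e i, v⟫) :=
  continuous_const.mul (Continuous.inner continuous_const continuous_id)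

/-- The connected component of a cell point is the cell. -/
lemma comp_eq_acell (e : ι → V) {s : ι → ℝ} (hs : apm s) {x : V} (hx : x ∈ acell e s) :
    connectedComponentIn (arrComplement e) x = acell e s := by
  apply Set.Subset.antisymm
  · intro y hy i
    by_contra hle
    push_neg at hle
    have hconn : IsPreconnected (connectedComponentIn (arrComplement e) x) :=
      isPreconnected_connectedComponentIn
    have hxmem : x ∈ connectedComponentIn (arrComplement e) x :=
      mem_connectedComponentIn (acell_subset_compl hx)
    obtain ⟨z, hz, hz0⟩ := hconn.intermediate_value₂ hy hxmem
      ((acell_cont e s i).continuousOn) continuousOn_const hle (hx i).le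
    have hzc : z ∈ arrComplement e := connectedComponentIn_subset _ _ hz
    have : ⟪e i, z⟫ = 0 := by
      rcases mul_eq_zero.1 hz0 with h | h
      · exact absurd h (hs.ne_zero i)
      · exact h
    exact hzc i this
  · exact (acell_convex e s).isPreconnected.subset_connectedComponentIn hx acell_subset_compl

/-- The closure of a nonempty cell is the corresponding closed region. -/
lemma closure_acell (e : ι → V) {s : ι → ℝ} {x : V} (hx : x ∈ acell e s) :
    closure (acell e s) = arg e s := by
  apply Set.Subset.antisymm
  · apply closure_minimal acell_subset_arg
    have : arg e s = ⋂ i, {v : V | 0 ≤ s i * ⟪e i, v⟫} := by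
      ext v; simp [arg, Set.mem_iInter]
    rw [this]
    exact isClosed_iInter fun i => isClosed_le continuous_const (acell_cont e s i)
  · intro v hv
    have htend : Filter.Tendsto (fun n : ℕ => v + (1 / (n + 1) : ℝ) • (x - v))
        Filter.atTop (nhds v) := by
      have h1 : Filter.Tendsto (fun n : ℕ => (1 / (n + 1) : ℝ)) Filter.atTop (nhds 0) :=
        tendsto_one_div_add_atTop_nhds_zero_nat
      have h2 : Filter.Tendsto (fun n : ℕ => (1 / (n + 1) : ℝ) • (x - v))
          Filter.atTop (nhds ((0:ℝ) • (x - v))) := h1.smul_const _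
      rw [zero_smul] at h2
      simpa using (tendsto_const_nhds.add h2)
    apply mem_closure_of_tendsto htend
    filter_upwards with n
    intro i
    have hn : (0:ℝ) < 1 / (n + 1) := by positivity
    have : s i * ⟪e i, v + (1 / (n + 1) : ℝ) • (x - v)⟫
        = s i * ⟪e i, v⟫ + (1 / (n + 1) : ℝ) * (s i * ⟪e i, x⟫ - s i * ⟪e i, v⟫) := by
      rw [inner_add_right, real_inner_smul_right, inner_sub_right]; ring
    have ht1 : (1 / (n + 1) : ℝ) ≤ 1 := by
      rw [div_le_one (by positivity)]
      simp
    rw [this]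
    nlinarith [hv i, hx i, hn, ht1]

/-- Characterization of regions via sign vectors. -/
lemma isRegion_iff (e : ι → V) (R : Set V) :
    IsRegion e R ↔ ∃ s : ι → ℝ, apm s ∧ (∃ x, x ∈ acell e s) ∧ R = arg e s := by
  constructor
  · rintro ⟨x, hx, rfl⟩
    refine ⟨fun i => if 0 < ⟪e i, x⟫ then 1 else -1,
      fun i => by by_cases h : 0 < ⟪e i, x⟫ <;> simp [h], ⟨x, ?_⟩, ?_⟩
    · intro i
      by_cases h : 0 < ⟪e i, x⟫
      · simp only [if_pos h, one_mul]; exact h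
      · simp only [if_neg h, neg_one_mul]
        have := hx i
        push_neg at h
        have : ⟪e i, x⟫ < 0 := lt_of_le_of_ne h (hx i)
        linarith
    · set s : ι → ℝ := fun i => if 0 < ⟪e i, x⟫ then 1 else -1 with hsdef
      have hspm : apm s := fun i => by simp only [hsdef]; split <;> simp
      have hxc : x ∈ acell e s := by
        intro i
        by_cases h : 0 < ⟪e i, x⟫
        · simp only [hsdef, if_pos h, one_mul]; exact h
        · simp only [hsdef, if_neg h, neg_one_mul]
          push_neg at h
          have : ⟪e i, x⟫ < 0 := lt_of_le_of_ne h (hx i)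
          linarith
      rw [comp_eq_acell e hspm hxc, closure_acell e hxc]
  · rintro ⟨s, hs, ⟨x, hx⟩, rfl⟩
    exact ⟨x, acell_subset_compl hx, by rw [comp_eq_acell e hs hx, closure_acell e hx]⟩

/-- Separation set relative to the all-positive base region. -/
lemma sepSet_eq (e : ι → V) {B : Set V} (hBpos : ∀ i, B ⊆ posHalf e i)
    {xB : V} (hxBB : xB ∈ B) (hxBpos : ∀ i, 0 < ⟪e i, xB⟫)
    {s : ι → ℝ} (hs : apm s) {x : V} (hx : x ∈ acell e s) :
    sepSet e B (arg e s) = {i | s i = -1} := by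
  ext i
  simp only [sepSet, Set.mem_setOf_eq]
  constructor
  · rintro (⟨-, hneg⟩ | ⟨hBneg, -⟩)
    · have hxneg : ⟪e i, x⟫ ≤ 0 := hneg (acell_subset_arg hx)
      rcases hs i with h1 | h1
      · exfalso
        have := hx i
        rw [h1, one_mul] at this
        linarith
      · exact h1
    · exact absurd (hBneg hxBB) (not_le.2 (hxBpos i))
  · intro hi
    left
    refine ⟨hBpos i, fun v hv => ?_⟩
    have := hv i
    rw [hi] at this
    simp only [negHalf, Set.mem_setOf_eq]
    linarith

/-- Perturbation lemma: a point with nonnegative signs perturbed in a strictly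
compatible direction lands in the open cell. -/
lemma perturb (e : ι → V) {s : ι → ℝ} {f c : V}
    (h : ∀ j, 0 < s j * ⟪e j, f⟫ ∨ (s j * ⟪e j, f⟫ = 0 ∧ 0 < s j * ⟪e j, c⟫)) :
    ∃ x, x ∈ acell e s := by
  have key : ∀ᶠ ε in nhdsWithin (0:ℝ) (Set.Ioi 0), ∀ j, 0 < s j * ⟪e j, f + ε • c⟫ := by
    rw [Filter.eventually_all]
    intro j
    have hexp : ∀ ε : ℝ, s j * ⟪e j, f + ε • c⟫
        = s j * ⟪e j, f⟫ + ε * (s j * ⟪e j, c⟫) := by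
      intro ε; rw [inner_add_right, real_inner_smul_right]; ring
    rcases h j with hpos | ⟨hz, hc⟩
    · have hcont : Filter.Tendsto (fun ε : ℝ => s j * ⟪e j, f + ε • c⟫)
          (nhdsWithin (0:ℝ) (Set.Ioi 0)) (nhds (s j * ⟪e j, f⟫)) := by
        simp only [hexp]
        have hc2 : Filter.Tendsto (fun ε : ℝ => s j * ⟪e j, f⟫ + ε * (s j * ⟪e j, c⟫))
            (nhds 0) (nhds (s j * ⟪e j, f⟫ + 0 * (s j * ⟪e j, c⟫))) := by
          apply Filter.Tendsto.add tendsto_const_nhds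
          exact (continuous_id.mul continuous_const).tendsto 0
        rw [zero_mul, add_zero] at hc2
        exact hc2.mono_left nhdsWithin_le_nhds
      exact hcont.eventually (eventually_gt_nhds hpos)
    · filter_upwards [self_mem_nhdsWithin] with ε hε
      rw [hexp, hz, zero_add]
      exact mul_pos hε hc
  obtain ⟨ε, hε⟩ := key.exists
  exact ⟨f + ε • c, hε⟩

/-- For any face `F`, the regions containing `F` form a nonempty interval `[m_F, M_F]`
of the poset of regions, and `F` is the intersection of the regions of this interval. -/
theorem stmt1 (e : ι → V) (hne : ∀ i, e i ≠ 0) (B : Set V)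
    (hB : IsRegion e B) (hBpos : ∀ i, B ⊆ posHalf e i)
    (F : Set V) (hF : IsFace e F) :
    ∃ m M, IsRegion e m ∧ IsRegion e M ∧ PRle e B m M ∧
      (∀ R, IsRegion e R → (F ⊆ R ↔ (PRle e B m R ∧ PRle e B R M))) ∧
      F = ⋂₀ {R | IsRegion e R ∧ PRle e B m R ∧ PRle e B R M} := by
  classical
  -- data for the base region
  obtain ⟨sB, hsBpm, ⟨xB, hxB⟩, hBeq⟩ := (isRegion_iff e B).1 hB
  have hxBB : xB ∈ B := hBeq ▸ acell_subset_arg hxB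
  have hxBpos : ∀ i, 0 < ⟪e i, xB⟫ := by
    intro i
    have h0 : 0 ≤ ⟪e i, xB⟫ := hBpos i hxBB
    rcases eq_or_lt_of_le h0 with h | h
    · exfalso
      have := hxB i
      rw [← h, mul_zero] at this
      exact lt_irrefl 0 this
    · exact h
  -- data for the face
  obtain ⟨Rs, ⟨R₀, hR₀⟩, hRs, hFeq⟩ := hF
  obtain ⟨σ, hσpm, ⟨x₀, hx₀⟩, hR₀eq⟩ := (isRegion_iff e R₀).1 (hRs R₀ hR₀)
  have hFσ : ∀ g ∈ F, ∀ j, 0 ≤ σ j * ⟪e j, g⟫ := by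
    intro g hg j
    have : g ∈ R₀ := by
      rw [hFeq] at hg
      exact hg R₀ hR₀
    rw [hR₀eq] at this
    exact this j
  -- F contains 0 and is closed under addition
  have hF0 : (0 : V) ∈ F := by
    rw [hFeq]
    intro R hR
    obtain ⟨s, -, -, rfl⟩ := (isRegion_iff e R).1 (hRs R hR)
    intro i
    simp
  have hFadd : ∀ a b : V, a ∈ F → b ∈ F → a + b ∈ F := by
    intro a b ha hb
    rw [hFeq] at ha hb ⊢
    intro R hR
    obtain ⟨s, -, -, rfl⟩ := (isRegion_iff e R).1 (hRs R hR)
    intro i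
    have h1 := ha _ hR i
    have h2 := hb _ hR i
    rw [inner_add_right, mul_add]
    exact add_nonneg h1 h2
  -- a generic point of F
  set g : ι → V := fun i =>
    if h : ∃ y ∈ F, ⟪e i, y⟫ ≠ 0 then h.choose else 0 with hgdef
  have hgF : ∀ i, g i ∈ F := by
    intro i
    by_cases h : ∃ y ∈ F, ⟪e i, y⟫ ≠ 0
    · simp only [hgdef, dif_pos h]
      exact h.choose_spec.1
    · simp only [hgdef, dif_neg h]
      exact hF0
  have hgne : ∀ i, (∃ y ∈ F, ⟪e i, y⟫ ≠ 0) → ⟪e i, g i⟫ ≠ 0 := by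
    intro i h
    simp only [hgdef, dif_pos h]
    exact h.choose_spec.2
  set f : V := ∑ i : ι, g i with hfdef
  have hfF : f ∈ F := by
    rw [hfdef]
    exact Finset.sum_induction g (· ∈ F) hFadd hF0 (fun i _ => hgF i)
  -- key property of f
  have hfkey : ∀ j, ⟪e j, f⟫ = 0 → ∀ y ∈ F, ⟪e j, y⟫ = 0 := by
    intro j hj
    by_contra hcon
    push_neg at hcon
    obtain ⟨y, hyF, hyne⟩ := hcon
    have hj' : ⟪e j, g j⟫ ≠ 0 := hgne j ⟨y, hyF, hyne⟩
    have hterm : ∀ i ∈ Finset.univ, 0 ≤ σ j * ⟪e j, g i⟫ :=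
      fun i _ => hFσ (g i) (hgF i) j
    have hsum : σ j * ⟪e j, f⟫ = ∑ i : ι, σ j * ⟪e j, g i⟫ := by
      rw [hfdef, inner_sum, Finset.mul_sum]
    have hle : σ j * ⟪e j, g j⟫ ≤ ∑ i : ι, σ j * ⟪e j, g i⟫ :=
      Finset.single_le_sum hterm (Finset.mem_univ j)
    have hpos : 0 < σ j * ⟪e j, g j⟫ :=
      lt_of_le_of_ne (hFσ (g j) (hgF j) j)
        (fun h => hj' (by
          rcases mul_eq_zero.1 h.symm with h' | h'
          · exact absurd h' (hσpm.ne_zero j)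
          · exact h'))
    rw [hj, mul_zero] at hsum
    linarith
  have hfσ : ∀ j, 0 ≤ σ j * ⟪e j, f⟫ := hFσ f hfF
  -- sign vectors of m and M
  set sm : ι → ℝ := fun j => if ⟪e j, f⟫ < 0 then -1 else 1 with hsmdef
  set sM : ι → ℝ := fun j => if 0 < ⟪e j, f⟫ then 1 else -1 with hsMdef
  have hsmpm : apm sm := fun j => by
    rw [hsmdef]; by_cases h : ⟪e j, f⟫ < 0 <;> simp [h]
  have hsMpm : apm sM := fun j => by
    rw [hsMdef]; by_cases h : 0 < ⟪e j, f⟫ <;> simp [h]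
  -- nonemptiness of the corresponding cells
  have hsmneg : ∀ j, ⟪e j, f⟫ < 0 → sm j = -1 := by
    intro j h
    simp only [hsmdef]
    rw [if_pos h]
  have hsmpos : ∀ j, ¬ (⟪e j, f⟫ < 0) → sm j = 1 := by
    intro j h
    simp only [hsmdef]
    rw [if_neg h]
  have hsMpos : ∀ j, 0 < ⟪e j, f⟫ → sM j = 1 := by
    intro j h
    simp only [hsMdef]
    rw [if_pos h]
  have hsMneg : ∀ j, ¬ (0 < ⟪e j, f⟫) → sM j = -1 := by
    intro j h
    simp only [hsMdef]
    rw [if_neg h]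
  have hmcell : ∃ x, x ∈ acell e sm := by
    apply perturb e (f := f) (c := xB)
    intro j
    rcases lt_trichotomy (⟪e j, f⟫) 0 with h | h | h
    · left
      rw [hsmneg j h]
      linarith
    · right
      refine ⟨by rw [h, mul_zero], ?_⟩
      rw [hsmpos j (by rw [h]; exact lt_irrefl 0), one_mul]
      exact hxBpos j
    · left
      rw [hsmpos j (by linarith), one_mul]
      exact h
  have hMcell : ∃ x, x ∈ acell e sM := by
    apply perturb e (f := f) (c := -xB)
    intro j
    rcases lt_trichotomy (⟪e j, f⟫) 0 with h | h | h
    · left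
      rw [hsMneg j (by linarith), neg_one_mul]
      linarith
    · right
      refine ⟨by rw [h, mul_zero], ?_⟩
      rw [hsMneg j (by rw [h]; exact lt_irrefl 0), neg_one_mul, inner_neg_right]
      simpa using hxBpos j
    · left
      rw [hsMpos j h, one_mul]
      exact h
  obtain ⟨xm, hxm⟩ := hmcell
  obtain ⟨xM, hxM⟩ := hMcell
  have hmreg : IsRegion e (arg e sm) := (isRegion_iff e _).2 ⟨sm, hsmpm, ⟨xm, hxm⟩, rfl⟩
  have hMreg : IsRegion e (arg e sM) := (isRegion_iff e _).2 ⟨sM, hsMpm, ⟨xM, hxM⟩, rfl⟩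
  -- separation sets
  have hsepm : sepSet e B (arg e sm) = {j | ⟪e j, f⟫ < 0} := by
    rw [sepSet_eq e hBpos hxBB hxBpos hsmpm hxm]
    ext j
    simp only [Set.mem_setOf_eq, hsmdef]
    by_cases h : ⟪e j, f⟫ < 0 <;> simp [h] <;> norm_num
  have hsepM : sepSet e B (arg e sM) = {j | ⟪e j, f⟫ ≤ 0} := by
    rw [sepSet_eq e hBpos hxBB hxBpos hsMpm hxM]
    ext j
    simp only [Set.mem_setOf_eq, hsMdef]
    by_cases h : 0 < ⟪e j, f⟫
    · simp only [if_pos h]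
      norm_num
      linarith
    · simp only [if_neg h]
      norm_num
      linarith
  -- main characterization
  have hchar : ∀ R, IsRegion e R →
      (F ⊆ R ↔ (PRle e B (arg e sm) R ∧ PRle e B R (arg e sM))) := by
    intro R hR
    obtain ⟨s, hspm, ⟨x, hx⟩, rfl⟩ := (isRegion_iff e R).1 hR
    have hsepR : sepSet e B (arg e s) = {j | s j = -1} := sepSet_eq e hBpos hxBB hxBpos hspm hx
    unfold PRle
    rw [hsepm, hsepM, hsepR]
    constructor
    · intro hsub
      have hfs : ∀ j, 0 ≤ s j * ⟪e j, f⟫ := fun j => hsub hfF j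
      constructor
      · intro j hj
        simp only [Set.mem_setOf_eq] at hj ⊢
        rcases hspm j with h1 | h1
        · exfalso
          have := hfs j
          rw [h1, one_mul] at this
          linarith
        · exact h1
      · intro j hj
        simp only [Set.mem_setOf_eq] at hj ⊢
        have := hfs j
        rw [hj] at this
        linarith
    · rintro ⟨h1, h2⟩ y hy j
      rcases lt_trichotomy (⟪e j, f⟫) 0 with h | h | h
      · have hsj : s j = -1 := h1 h
        have hσj : σ j = -1 := by
          rcases hσpm j with h' | h'
          · exfalso
            have := hfσ j
            rw [h', one_mul] at this
            linarith
          · exact h'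
        have := hFσ y hy j
        rw [hσj] at this
        rw [hsj]
        exact this
      · have := hfkey j h y hy
        rw [this, mul_zero]
      · have hsj : s j = 1 := by
          rcases hspm j with h' | h'
          · exact h'
          · exfalso
            have := h2 h'
            simp only [Set.mem_setOf_eq] at this
            linarith
        have hσj : σ j = 1 := by
          rcases hσpm j with h' | h'
          · exact h'
          · exfalso
            have := hfσ j
            rw [h', neg_one_mul] at this
            linarith
        have := hFσ y hy j
        rw [hσj] at this
        rw [hsj]
        exact this
  -- the interval ordering m ≤ M
  have hmM : PRle e B (arg e sm) (arg e sM) := by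
    unfold PRle
    rw [hsepm, hsepM]
    intro j hj
    simp only [Set.mem_setOf_eq] at hj ⊢
    linarith
  refine ⟨arg e sm, arg e sM, hmreg, hMreg, hmM, hchar, ?_⟩
  apply Set.Subset.antisymm
  · intro v hv
    intro R hRmem
    obtain ⟨hRreg, hle1, hle2⟩ := hRmem
    exact (hchar R hRreg).2 ⟨hle1, hle2⟩ hv
  · intro v hv
    rw [hFeq]
    intro R hRmem
    have hRreg := hRs R hRmem
    have hFR : F ⊆ R := by
      rw [hFeq]
      exact Set.sInter_subset_of_mem hRmem
    exact hv R ⟨hRreg, (hchar R hRreg).1 hFR⟩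
end

section
/- For any two faces F, G of 𝒜: F ⊆ G if and only if [m_F, M_F] ⊇ [m_G, M_G], i.e. if and only if m_F ≤ m_G and M_G ≤ M_F in the poset of regions PR(𝒜,B). -/
open scoped RealInnerProductSpace Pointwise

variable {V : Type*} [NormedAddCommGroup V] [InnerProductSpace ℝ V] [FiniteDimensional ℝ V]
  {ι : Type*} [Fintype ι]

/-- `F ⊆ G` iff `[m_F, M_F] ⊇ [m_G, M_G]`, i.e. `m_F ≤ m_G` and `M_G ≤ M_F`. -/
theorem stmt2 (e : ι → V) (hne : ∀ i, e i ≠ 0) (B : Set V)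
    (hB : IsRegion e B) (hBpos : ∀ i, B ⊆ posHalf e i)
    (F G mF MF mG MG : Set V) (hF : IsFace e F) (hG : IsFace e G)
    (hFI : IsFacialInterval e B F mF MF) (hGI : IsFacialInterval e B G mG MG) :
    F ⊆ G ↔ (PRle e B mF mG ∧ PRle e B MG MF) := by
  obtain ⟨hmF, hMF, hFch⟩ := hFI
  obtain ⟨hmG, hMG, hGch⟩ := hGI
  obtain ⟨Rs, ⟨R0, hR0⟩, hReg, rfl⟩ := hG
  have hGR0 : (⋂₀ Rs) ⊆ R0 := Set.sInter_subset_of_mem hR0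
  have h0 := (hGch R0 (hReg R0 hR0)).mp hGR0
  have hmGMG : PRle e B mG MG := Set.Subset.trans h0.1 h0.2
  have hGmG : (⋂₀ Rs) ⊆ mG := (hGch mG hmG).mpr ⟨fun _ h => h, hmGMG⟩
  have hGMG : (⋂₀ Rs) ⊆ MG := (hGch MG hMG).mpr ⟨hmGMG, fun _ h => h⟩
  constructor
  · intro hFG
    exact ⟨((hFch mG hmG).mp (hFG.trans hGmG)).1,
      ((hFch MG hMG).mp (hFG.trans hGMG)).2⟩
  · rintro ⟨h1, h2⟩ x hx
    refine Set.mem_sInter.2 fun R hR => ?_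
    have hRint := (hGch R (hReg R hR)).mp (Set.sInter_subset_of_mem hR)
    exact (hFch R (hReg R hR)).mpr
      ⟨Set.Subset.trans h1 hRint.1, Set.Subset.trans hRint.2 h2⟩ hx
end

section
/- For any two faces F, G of 𝒜, any two of the following conditions imply the third: (1) F ⊆ G, (2) M_F = M_G, (3) F ≤ G in the facial weak order FW(𝒜,B). Dually, any two of the following imply the third: (1′) G ⊆ F, (2′) m_F = m_G, (3′) F ≤ G in FW(𝒜,B). -/
open scoped RealInnerProductSpace Pointwise

variable {V : Type*} [NormedAddCommGroup V] [InnerProductSpace ℝ V] [FiniteDimensional ℝ V]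
  {ι : Type*} [Fintype ι]

section Helpers

lemma inner_cont (w : V) : Continuous fun v : V => ⟪w, v⟫ :=
  continuous_const.inner continuous_id

lemma component_eq (e : ι → V) (x : V) (hx : x ∈ arrComplement e) :
    connectedComponentIn (arrComplement e) x
      = {v | ∀ i, 0 < ⟪e i, x⟫ * ⟪e i, v⟫} := by
  set C : Set V := {v | ∀ i, 0 < ⟪e i, x⟫ * ⟪e i, v⟫} with hC
  have hconv : Convex ℝ C := by
    have : C = ⋂ i, {v : V | 0 < ⟪e i, x⟫ * ⟪e i, v⟫} := by
      ext v; simp [hC]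
    rw [this]
    refine convex_iInter fun i => ?_
    have hlin : IsLinearMap ℝ (fun v : V => ⟪e i, x⟫ * ⟪e i, v⟫) := by
      constructor
      · intro a b; rw [inner_add_right]; ring
      · intro c a; rw [real_inner_smul_right]; simp [smul_eq_mul]; ring
    exact convex_halfSpace_gt hlin 0
  have hxC : x ∈ C := fun i => mul_self_pos.mpr (hx i)
  have hCsub : C ⊆ arrComplement e := by
    intro v hv i
    intro h0
    have := hv i
    rw [h0, mul_zero] at this
    exact lt_irrefl 0 this
  apply Set.Subset.antisymm
  · -- component ⊆ C
    intro v hv i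
    by_contra h
    have hvc : v ∈ arrComplement e := connectedComponentIn_subset _ _ hv
    have hne : ⟪e i, x⟫ * ⟪e i, v⟫ ≠ 0 := mul_ne_zero (hx i) (hvc i)
    have hlt : ⟪e i, x⟫ * ⟪e i, v⟫ < 0 := lt_of_le_of_ne (not_lt.mp h) hne
    have hpc : IsPreconnected (connectedComponentIn (arrComplement e) x) :=
      isPreconnected_connectedComponentIn
    have hcont : ContinuousOn (fun w : V => ⟪e i, x⟫ * ⟪e i, w⟫)
        (connectedComponentIn (arrComplement e) x) :=
      (continuous_const.mul (inner_cont (e i))).continuousOn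
    have hmem := hpc.intermediate_value hv (mem_connectedComponentIn hx) hcont
    have h0 : (0 : ℝ) ∈ Set.Icc (⟪e i, x⟫ * ⟪e i, v⟫) (⟪e i, x⟫ * ⟪e i, x⟫) :=
      ⟨le_of_lt hlt, le_of_lt (hxC i)⟩
    obtain ⟨w, hw, hfw⟩ := hmem h0
    have hwc : w ∈ arrComplement e := connectedComponentIn_subset _ _ hw
    rcases mul_eq_zero.mp hfw with h1 | h1
    · exact hx i h1
    · exact hwc i h1
  · exact hconv.isPreconnected.subset_connectedComponentIn hxC hCsub

lemma region_neg_iff (e : ι → V) (x : V) (hx : x ∈ arrComplement e) (i : ι) :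
    closure (connectedComponentIn (arrComplement e) x) ⊆ negHalf e i ↔ ⟪e i, x⟫ < 0 := by
  rw [component_eq e x hx]
  constructor
  · intro h
    have hxm : x ∈ closure {v : V | ∀ i, 0 < ⟪e i, x⟫ * ⟪e i, v⟫} :=
      subset_closure (fun i => mul_self_pos.mpr (hx i))
    have := h hxm
    exact lt_of_le_of_ne this (hx i)
  · intro h
    have hcl : IsClosed (negHalf e i) := by
      have : negHalf e i = (fun v : V => ⟪e i, v⟫) ⁻¹' Set.Iic 0 := rfl
      rw [this]; exact isClosed_Iic.preimage (inner_cont (e i))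
    refine closure_minimal ?_ hcl
    intro v hv
    have := hv i
    rcases mul_pos_iff.mp this with ⟨h1, _⟩ | ⟨_, h2⟩
    · exact absurd h1 (not_lt.mpr (le_of_lt h))
    · exact le_of_lt h2

lemma sep_char (e : ι → V) (B : Set V) (hB : IsRegion e B)
    (hBpos : ∀ i, B ⊆ posHalf e i) (R : Set V) (i : ι) :
    i ∈ sepSet e B R ↔ R ⊆ negHalf e i := by
  obtain ⟨xB, hxB, hBeq⟩ := hB
  have hxBmem : xB ∈ B := by
    rw [hBeq]; exact subset_closure (mem_connectedComponentIn hxB)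
  have hBneg : ¬ B ⊆ negHalf e i := by
    intro h
    have h1 := h hxBmem
    have h2 := hBpos i hxBmem
    exact hxB i (le_antisymm h1 h2)
  constructor
  · rintro (⟨_, h⟩ | ⟨h, _⟩)
    · exact h
    · exact absurd h hBneg
  · intro h; exact Or.inl ⟨hBpos i, h⟩

lemma regions_eq_of_sep_eq (e : ι → V) (B : Set V) (hB : IsRegion e B)
    (hBpos : ∀ i, B ⊆ posHalf e i) {R R' : Set V} (hR : IsRegion e R) (hR' : IsRegion e R')
    (hsep : sepSet e B R = sepSet e B R') : R = R' := by
  obtain ⟨x, hx, hReq⟩ := hR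
  obtain ⟨x', hx', hReq'⟩ := hR'
  have hsign : ∀ i, ⟪e i, x⟫ < 0 ↔ ⟪e i, x'⟫ < 0 := by
    intro i
    rw [← region_neg_iff e x hx i, ← region_neg_iff e x' hx' i, ← hReq, ← hReq',
      ← sep_char e B hB hBpos R i, ← sep_char e B hB hBpos R' i, hsep]
  have hCeq : {v : V | ∀ i, 0 < ⟪e i, x⟫ * ⟪e i, v⟫}
      = {v : V | ∀ i, 0 < ⟪e i, x'⟫ * ⟪e i, v⟫} := by
    ext v
    have key : ∀ i, (0 < ⟪e i, x⟫ * ⟪e i, v⟫ ↔ 0 < ⟪e i, x'⟫ * ⟪e i, v⟫) := by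
      intro i
      have hpos : 0 < ⟪e i, x⟫ ↔ 0 < ⟪e i, x'⟫ := by
        constructor
        · intro h
          rcases (hx' i).lt_or_gt with h' | h'
          · exact absurd ((hsign i).mpr h') (not_lt.mpr (le_of_lt h))
          · exact h'
        · intro h
          rcases (hx i).lt_or_gt with h' | h'
          · exact absurd ((hsign i).mp h') (not_lt.mpr (le_of_lt h))
          · exact h'
      rw [mul_pos_iff, mul_pos_iff, hpos, hsign i]
    simp only [Set.mem_setOf_eq]
    exact forall_congr' key
  rw [hReq, hReq', component_eq e x hx, component_eq e x' hx', hCeq]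

end Helpers

/-- Any two of (1) `F ⊆ G`, (2) `M_F = M_G`, (3) `F ≤ G` in the facial weak order
imply the third; dually for `G ⊆ F` and `m_F = m_G`. -/
theorem stmt3 (e : ι → V) (hne : ∀ i, e i ≠ 0) (B : Set V)
    (hB : IsRegion e B) (hBpos : ∀ i, B ⊆ posHalf e i)
    (F G mF MF mG MG : Set V) (hF : IsFace e F) (hG : IsFace e G)
    (hFI : IsFacialInterval e B F mF MF) (hGI : IsFacialInterval e B G mG MG) :
    ((F ⊆ G ∧ (PRle e B mF mG ∧ PRle e B MF MG)) → MF = MG) ∧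
    ((MF = MG ∧ (PRle e B mF mG ∧ PRle e B MF MG)) → F ⊆ G) ∧
    ((F ⊆ G ∧ MF = MG) → (PRle e B mF mG ∧ PRle e B MF MG)) ∧
    ((G ⊆ F ∧ (PRle e B mF mG ∧ PRle e B MF MG)) → mF = mG) ∧
    ((mF = mG ∧ (PRle e B mF mG ∧ PRle e B MF MG)) → G ⊆ F) ∧
    ((G ⊆ F ∧ mF = mG) → (PRle e B mF mG ∧ PRle e B MF MG)) := by
  obtain ⟨hmFr, hMFr, hFiff⟩ := hFI
  obtain ⟨hmGr, hMGr, hGiff⟩ := hGI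
  obtain ⟨Rs, ⟨R0, hR0⟩, hRsreg, hFeq⟩ := hF
  obtain ⟨Rs', ⟨R0', hR0'⟩, hRsreg', hGeq⟩ := hG
  have hFR0 : F ⊆ R0 := hFeq ▸ Set.sInter_subset_of_mem hR0
  have hGR0' : G ⊆ R0' := hGeq ▸ Set.sInter_subset_of_mem hR0'
  have hmFMF : PRle e B mF MF := by
    obtain ⟨h1, h2⟩ := (hFiff R0 (hRsreg R0 hR0)).mp hFR0
    exact Set.Subset.trans h1 h2
  have hmGMG : PRle e B mG MG := by
    obtain ⟨h1, h2⟩ := (hGiff R0' (hRsreg' R0' hR0')).mp hGR0'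
    exact Set.Subset.trans h1 h2
  have hFmF : F ⊆ mF := (hFiff mF hmFr).mpr ⟨subset_rfl, hmFMF⟩
  have hFMF : F ⊆ MF := (hFiff MF hMFr).mpr ⟨hmFMF, subset_rfl⟩
  have hGmG : G ⊆ mG := (hGiff mG hmGr).mpr ⟨subset_rfl, hmGMG⟩
  have hGMG : G ⊆ MG := (hGiff MG hMGr).mpr ⟨hmGMG, subset_rfl⟩
  refine ⟨?_, ?_, ?_, ?_, ?_, ?_⟩
  · rintro ⟨hFG, _, hMle⟩
    have hFMG : F ⊆ MG := hFG.trans hGMG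
    obtain ⟨_, h2⟩ := (hFiff MG hMGr).mp hFMG
    exact regions_eq_of_sep_eq e B hB hBpos hMFr hMGr (Set.Subset.antisymm hMle h2)
  · rintro ⟨hMeq, hmle, _⟩
    rw [hGeq]
    refine Set.subset_sInter fun R hR => ?_
    obtain ⟨h1, h2⟩ := (hGiff R (hRsreg' R hR)).mp (hGeq ▸ Set.sInter_subset_of_mem hR)
    exact (hFiff R (hRsreg' R hR)).mpr ⟨hmle.trans h1, hMeq ▸ h2⟩
  · rintro ⟨hFG, hMeq⟩
    refine ⟨?_, hMeq ▸ subset_rfl⟩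
    exact ((hFiff mG hmGr).mp (hFG.trans hGmG)).1
  · rintro ⟨hGF, hmle, _⟩
    have hGmF : G ⊆ mF := hGF.trans hFmF
    obtain ⟨h1, _⟩ := (hGiff mF hmFr).mp hGmF
    exact regions_eq_of_sep_eq e B hB hBpos hmFr hmGr (Set.Subset.antisymm hmle h1)
  · rintro ⟨hmeq, _, hMle⟩
    rw [hFeq]
    refine Set.subset_sInter fun R hR => ?_
    obtain ⟨h1, h2⟩ := (hFiff R (hRsreg R hR)).mp (hFeq ▸ Set.sInter_subset_of_mem hR)
    exact (hGiff R (hRsreg R hR)).mpr ⟨hmeq ▸ h1, h2.trans hMle⟩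
  · rintro ⟨hGF, hmeq⟩
    refine ⟨hmeq ▸ subset_rfl, ?_⟩
    exact ((hGiff MF hMFr).mp (hGF.trans hFMF)).2
end

section
/- The following are equivalent for a face F of 𝒜: (i) F ⊆ B; (ii) F(H) ≥ 0 for every wall H of B; (iii) F(H) ≥ 0 for all H ∈ 𝒜. -/
open scoped RealInnerProductSpace Pointwise

variable {V : Type*} [NormedAddCommGroup V] [InnerProductSpace ℝ V] [FiniteDimensional ℝ V]
  {ι : Type*} [Fintype ι]

section Aux

variable (e : ι → V)

private lemma contInner (w : V) : Continuous fun v : V => (⟪w, v⟫ : ℝ) :=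
  (innerSL ℝ w).continuous

/-- Characterization of regions as closed "sign chambers". -/
private lemma region_char {e : ι → V} {R : Set V} (hR : IsRegion e R) :
    ∃ x, (∀ i, (⟪e i, x⟫ : ℝ) ≠ 0) ∧ R = {v | ∀ i, 0 ≤ (⟪e i, x⟫ : ℝ) * ⟪e i, v⟫} := by
  obtain ⟨x, hx, rfl⟩ := hR
  refine ⟨x, hx, ?_⟩
  set S : Set V := {v | ∀ i, 0 < (⟪e i, x⟫ : ℝ) * ⟪e i, v⟫} with hSdef
  have hxS : x ∈ S := fun i => mul_self_pos.2 (hx i)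
  have hSopen : IsOpen S := by
    have : S = ⋂ i, {v : V | 0 < (⟪e i, x⟫ : ℝ) * ⟪e i, v⟫} := by
      ext v; simp [hSdef, Set.mem_iInter]
    rw [this]
    exact isOpen_iInter_of_finite fun i =>
      isOpen_lt continuous_const (continuous_const.mul (contInner _))
  have hSconv : Convex ℝ S := by
    intro p hp q hq a b ha hb hab i
    have hp' := hp i
    have hq' := hq i
    have hinner : (⟪e i, x⟫ : ℝ) * ⟪e i, a • p + b • q⟫ =
        a * ((⟪e i, x⟫ : ℝ) * ⟪e i, p⟫) + b * ((⟪e i, x⟫ : ℝ) * ⟪e i, q⟫) := by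
      rw [inner_add_right, real_inner_smul_right, real_inner_smul_right]; ring
    show (0:ℝ) < _
    rw [hinner]
    rcases eq_or_lt_of_le ha with ha' | ha'
    · have hb1 : b = 1 := by linarith
      rw [← ha', hb1]
      simpa using hq'
    · nlinarith [mul_pos ha' hp', mul_nonneg hb hq'.le]
  have hScomp : S ⊆ arrComplement e := by
    intro v hv i h0
    have := hv i
    rw [h0, mul_zero] at this
    exact lt_irrefl _ this
  have hcomp : connectedComponentIn (arrComplement e) x = S := by
    apply Set.Subset.antisymm
    · intro v hv i
      have hC : IsPreconnected (connectedComponentIn (arrComplement e) x) :=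
        isPreconnected_connectedComponentIn
      have hxC : x ∈ connectedComponentIn (arrComplement e) x := mem_connectedComponentIn hx
      have hCsub := connectedComponentIn_subset (arrComplement e) x
      set g : V → ℝ := fun u => (⟪e i, x⟫ : ℝ) * ⟪e i, u⟫ with hg
      have hgc : ContinuousOn g (connectedComponentIn (arrComplement e) x) :=
        (continuous_const.mul (contInner _)).continuousOn
      have hgv : g v ≠ 0 := mul_ne_zero (hx i) (hCsub hv i)
      rcases hgv.lt_or_gt with hneg | hpos
      · exfalso
        have h0 : (0:ℝ) ∈ Set.Icc (g v) (g x) := ⟨hneg.le, (mul_self_pos.2 (hx i)).le⟩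
        obtain ⟨w, hwC, hw0⟩ := hC.intermediate_value hv hxC hgc h0
        rcases mul_eq_zero.1 hw0 with h | h
        · exact hx i h
        · exact hCsub hwC i h
      · exact hpos
    · exact hSconv.isPreconnected.subset_connectedComponentIn hxS hScomp
  rw [hcomp]
  apply Set.Subset.antisymm
  · apply closure_minimal
    · exact fun v hv i => (hv i).le
    · have : {v : V | ∀ i, 0 ≤ (⟪e i, x⟫ : ℝ) * ⟪e i, v⟫} =
          ⋂ i, {v : V | 0 ≤ (⟪e i, x⟫ : ℝ) * ⟪e i, v⟫} := by
        ext v; simp [Set.mem_iInter]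
      rw [this]
      exact isClosed_iInter fun i =>
        isClosed_le continuous_const (continuous_const.mul (contInner _))
  · intro v hv
    have htend : Filter.Tendsto (fun t : ℝ => v + t • x) (nhdsWithin 0 (Set.Ioi 0)) (nhds v) := by
      have h1 : Filter.Tendsto (fun t : ℝ => v + t • x) (nhds 0) (nhds (v + (0:ℝ) • x)) :=
        ((continuous_const.add (continuous_id.smul continuous_const)).tendsto 0)
      simpa using h1.mono_left nhdsWithin_le_nhds
    apply mem_closure_of_tendsto htend
    filter_upwards [self_mem_nhdsWithin] with t ht
    intro i
    have hv' := hv i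
    have hx2 : (0:ℝ) < ⟪e i, x⟫ * ⟪e i, x⟫ := mul_self_pos.2 (hx i)
    have : (⟪e i, x⟫ : ℝ) * ⟪e i, v + t • x⟫ =
        (⟪e i, x⟫ : ℝ) * ⟪e i, v⟫ + t * ((⟪e i, x⟫ : ℝ) * ⟪e i, x⟫) := by
      rw [inner_add_right, real_inner_smul_right]; ring
    rw [this]
    have ht' : (0:ℝ) < t := ht
    nlinarith

private lemma base_char {e : ι → V} {B : Set V} (hB : IsRegion e B)
    (hBpos : ∀ i, B ⊆ posHalf e i) :
    B = {v | ∀ i, 0 ≤ (⟪e i, v⟫ : ℝ)} ∧ ∃ b, ∀ i, (0:ℝ) < ⟪e i, b⟫ := by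
  obtain ⟨x, hx, hRe⟩ := region_char hB
  have hxB : x ∈ B := by
    rw [hRe]; exact fun i => (mul_self_pos.2 (hx i)).le
  have hxpos : ∀ i, (0:ℝ) < ⟪e i, x⟫ :=
    fun i => lt_of_le_of_ne (hBpos i hxB) (Ne.symm (hx i))
  refine ⟨?_, x, hxpos⟩
  rw [hRe]
  ext v
  simp only [Set.mem_setOf_eq]
  constructor
  · intro h i
    have := h i
    nlinarith [hxpos i]
  · intro h i
    exact mul_nonneg (hxpos i).le (h i)

private lemma face_char {e : ι → V} {F : Set V} (hF : IsFace e F) :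
    Convex ℝ F ∧ F.Nonempty ∧ ∀ i, F ⊆ posHalf e i ∨ F ⊆ negHalf e i := by
  obtain ⟨Rs, ⟨R0, hR0⟩, hreg, rfl⟩ := hF
  refine ⟨?_, ⟨0, ?_⟩, ?_⟩
  · apply convex_sInter
    intro R hR
    obtain ⟨x, hx, hRe⟩ := region_char (hreg R hR)
    rw [hRe]
    intro p hp q hq a b ha hb hab i
    have hp' := hp i
    have hq' := hq i
    have hinner : (⟪e i, x⟫ : ℝ) * ⟪e i, a • p + b • q⟫ =
        a * ((⟪e i, x⟫ : ℝ) * ⟪e i, p⟫) + b * ((⟪e i, x⟫ : ℝ) * ⟪e i, q⟫) := by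
      rw [inner_add_right, real_inner_smul_right, real_inner_smul_right]; ring
    show (0:ℝ) ≤ _
    rw [hinner]
    nlinarith [mul_nonneg ha hp', mul_nonneg hb hq']
  · intro R hR
    obtain ⟨x, hx, hRe⟩ := region_char (hreg R hR)
    rw [hRe]
    intro i
    simp [inner_zero_right]
  · intro i
    obtain ⟨x, hx, hRe⟩ := region_char (hreg R0 hR0)
    have hFR0 : ⋂₀ Rs ⊆ R0 := Set.sInter_subset_of_mem hR0
    rcases (hx i).lt_or_gt with hneg | hpos
    · right
      intro v hv
      have := (hRe ▸ hFR0 hv) i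
      show (⟪e i, v⟫ : ℝ) ≤ 0
      nlinarith
    · left
      intro v hv
      have := (hRe ▸ hFR0 hv) i
      show (0:ℝ) ≤ ⟪e i, v⟫
      nlinarith

/-- From a point of the intrinsic interior one can push past any point of the set. -/
private lemma extend_intrinsic {s : Set V} {x y : V}
    (hx : x ∈ intrinsicInterior ℝ s) (hy : y ∈ s) :
    ∃ t : ℝ, 0 < t ∧ x + t • (x - y) ∈ s := by
  obtain ⟨x', hx', hxx⟩ := hx
  subst hxx
  have hyA : y ∈ affineSpan ℝ s := subset_affineSpan ℝ s hy
  have hmem : ∀ t : ℝ, ((x' : V) + t • ((x' : V) - y)) ∈ affineSpan ℝ s := by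
    intro t
    have := AffineSubspace.smul_vsub_vadd_mem (affineSpan ℝ s) t x'.2 hyA x'.2
    simpa [vsub_eq_sub, vadd_eq_add, add_comm] using this
  set g : ℝ → affineSpan ℝ s := fun t => ⟨(x' : V) + t • ((x' : V) - y), hmem t⟩ with hgdef
  have hg : Continuous g := by
    apply Continuous.subtype_mk
    exact continuous_const.add (continuous_id.smul continuous_const)
  have hg0 : g 0 = x' := by
    apply Subtype.ext; simp [hgdef]
  have hnb : interior (((↑) : affineSpan ℝ s → V) ⁻¹' s) ∈ nhds (g 0) := by
    rw [hg0]
    exact isOpen_interior.mem_nhds hx'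
  have hev : ∀ᶠ t in nhds (0:ℝ), g t ∈ interior (((↑) : affineSpan ℝ s → V) ⁻¹' s) :=
    hg.continuousAt.eventually_mem hnb
  have hev' : ∀ᶠ t in nhdsWithin (0:ℝ) (Set.Ioi 0),
      g t ∈ interior (((↑) : affineSpan ℝ s → V) ⁻¹' s) :=
    hev.filter_mono nhdsWithin_le_nhds
  obtain ⟨t, htmem, htpos⟩ := (hev'.and (eventually_mem_nhdsWithin)).exists
  have hmem' : g t ∈ ((↑) : affineSpan ℝ s → V) ⁻¹' s := interior_subset htmem
  exact ⟨t, htpos, hmem'⟩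

/-- The key per-hyperplane equivalence for a convex nonempty set lying on one side. -/
private lemma covec_nonneg_iff {e : ι → V} {F : Set V} {i : ι}
    (hconv : Convex ℝ F) (hFne : F.Nonempty)
    (hside : F ⊆ posHalf e i ∨ F ⊆ negHalf e i) :
    0 ≤ covec e F i ↔ F ⊆ posHalf e i := by
  constructor
  · intro h
    rcases hside with hpos | hneg
    · exact hpos
    obtain ⟨x, hx⟩ := Set.Nonempty.intrinsicInterior hconv hFne
    have hxF : x ∈ F := intrinsicInterior_subset hx
    have hx0 : (⟪e i, x⟫ : ℝ) ≤ 0 := hneg hxF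
    unfold covec at h
    split_ifs at h with h1 h2
    · exfalso
      have := h1 x hx
      linarith
    · exact absurd h (by decide)
    · push_neg at h2
      obtain ⟨x', hx', hx'0⟩ := h2
      have hx'F : x' ∈ F := intrinsicInterior_subset hx'
      have hx'eq : (⟪e i, x'⟫ : ℝ) = 0 := le_antisymm (hneg hx'F) hx'0
      intro y hy
      obtain ⟨t, htpos, hz⟩ := extend_intrinsic hx' hy
      have hzF : (⟪e i, x' + t • (x' - y)⟫ : ℝ) ≤ 0 := hneg hz
      have hcalc : (⟪e i, x' + t • (x' - y)⟫ : ℝ) = - (t * ⟪e i, y⟫) := by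
        rw [inner_add_right, real_inner_smul_right, inner_sub_right, hx'eq]; ring
      rw [hcalc] at hzF
      show (0:ℝ) ≤ ⟪e i, y⟫
      nlinarith
  · intro h
    unfold covec
    split_ifs with h1 h2
    · decide
    · exfalso
      obtain ⟨x, hx⟩ := Set.Nonempty.intrinsicInterior hconv hFne
      have := h2 x hx
      have := h (intrinsicInterior_subset hx)
      have h0 : (0:ℝ) ≤ ⟪e i, x⟫ := this
      linarith [h2 x hx]
    · decide

/-- Generic point: a nonempty open set contains a point avoiding finitely many hyperplanes. -/
private lemma exists_generic {κ : Type*} [Fintype κ] (w : κ → V) {U : Set V}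
    (hU : IsOpen U) (hUne : U.Nonempty) :
    ∃ b ∈ U, ∀ m, w m ≠ 0 → (⟪w m, b⟫ : ℝ) ≠ 0 := by
  have hdense : Dense (⋂ m, {z : V | w m ≠ 0 → (⟪w m, z⟫ : ℝ) ≠ 0}) := by
    apply dense_iInter_of_isOpen
    · intro m
      by_cases hm : w m = 0
      · have : {z : V | w m ≠ 0 → (⟪w m, z⟫ : ℝ) ≠ 0} = Set.univ := by
          ext z; simp [hm]
        rw [this]; exact isOpen_univ
      · have he : {z : V | w m ≠ 0 → (⟪w m, z⟫ : ℝ) ≠ 0} = {z : V | (⟪w m, z⟫ : ℝ) ≠ 0} := by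
          ext z; simp [hm]
        rw [he]
        exact isOpen_ne_fun (contInner _) continuous_const
    · intro m
      by_cases hm : w m = 0
      · have : {z : V | w m ≠ 0 → (⟪w m, z⟫ : ℝ) ≠ 0} = Set.univ := by
          ext z; simp [hm]
        rw [this]; exact dense_univ
      · have he : {z : V | w m ≠ 0 → (⟪w m, z⟫ : ℝ) ≠ 0} = {z : V | (⟪w m, z⟫ : ℝ) ≠ 0} := by
          ext z; simp [hm]
        rw [he]
        intro z
        by_cases hz : (⟪w m, z⟫ : ℝ) = 0
        · have htend : Filter.Tendsto (fun t : ℝ => z + t • w m)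
              (nhdsWithin 0 (Set.Ioi 0)) (nhds z) := by
            have h1 : Filter.Tendsto (fun t : ℝ => z + t • w m) (nhds 0)
                (nhds (z + (0:ℝ) • w m)) :=
              ((continuous_const.add (continuous_id.smul continuous_const)).tendsto 0)
            simpa using h1.mono_left nhdsWithin_le_nhds
          apply mem_closure_of_tendsto htend
          filter_upwards [self_mem_nhdsWithin] with t ht
          show (⟪w m, z + t • w m⟫ : ℝ) ≠ 0
          rw [inner_add_right, real_inner_smul_right, hz, zero_add]
          have hww : (0:ℝ) < ⟪w m, w m⟫ :=
            lt_of_le_of_ne real_inner_self_nonneg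
              (fun h => hm (inner_self_eq_zero.1 h.symm))
          have ht' : (0:ℝ) < t := ht
          positivity
        · exact subset_closure hz
  obtain ⟨b, hbS, hbU⟩ := hdense.exists_mem_open hU hUne
  refine ⟨b, hbU, ?_⟩
  intro m
  exact Set.mem_iInter.1 hbS m

/-- Redundancy of non-wall inequalities: a point satisfying all wall inequalities of the
base region satisfies all of them. -/
private lemma redundant {e : ι → V} {B : Set V}
    (hBeq : B = {v : V | ∀ i, 0 ≤ (⟪e i, v⟫ : ℝ)}) {b₀ : V} (hb₀ : ∀ i, (0:ℝ) < ⟪e i, b₀⟫)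
    {v : V} (hv : ∀ i, IsWall e B i → 0 ≤ (⟪e i, v⟫ : ℝ)) :
    ∀ j, (0:ℝ) ≤ ⟪e j, v⟫ := by
  classical
  by_contra hcon
  push_neg at hcon
  obtain ⟨j, hj⟩ := hcon
  -- generic interior point b
  set w : ι × ι → V := fun p => (⟪e p.2, v⟫ : ℝ) • e p.1 - (⟪e p.1, v⟫ : ℝ) • e p.2 with hwdef
  have hUopen : IsOpen {z : V | ∀ i, (0:ℝ) < ⟪e i, z⟫} := by
    have : {z : V | ∀ i, (0:ℝ) < ⟪e i, z⟫} = ⋂ i, {z : V | (0:ℝ) < ⟪e i, z⟫} := by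
      ext z; simp [Set.mem_iInter]
    rw [this]
    exact isOpen_iInter_of_finite fun i => isOpen_lt continuous_const (contInner _)
  obtain ⟨b, hb, hgen⟩ := exists_generic w hUopen ⟨b₀, fun i => hb₀ i⟩
  have hb : ∀ i, (0:ℝ) < ⟪e i, b⟫ := hb
  -- the finite set of violated constraints
  set D : Finset ι := Finset.univ.filter (fun i => (⟪e i, v⟫ : ℝ) < 0) with hDdef
  have hDne : D.Nonempty := ⟨j, by simp [hDdef, hj]⟩
  have hmemD : ∀ i ∈ D, (⟪e i, v⟫ : ℝ) < 0 := fun i hi => (Finset.mem_filter.1 hi).2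
  set t : ι → ℝ := fun i => ⟪e i, b⟫ / (⟪e i, b⟫ - ⟪e i, v⟫) with htdef
  have hdenom : ∀ i ∈ D, (0:ℝ) < ⟪e i, b⟫ - ⟪e i, v⟫ := fun i hi => by
    have := hmemD i hi; linarith [hb i]
  have htpos : ∀ i ∈ D, 0 < t i := fun i hi => div_pos (hb i) (hdenom i hi)
  have htlt : ∀ i ∈ D, t i < 1 := fun i hi => by
    rw [htdef]
    rw [div_lt_one (hdenom i hi)]
    have := hmemD i hi
    linarith
  set T : ℝ := D.inf' hDne t with hTdef
  obtain ⟨k₀, hk₀D, hTk₀⟩ := Finset.exists_mem_eq_inf' hDne t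
  have hTk₀' : T = t k₀ := by rw [hTdef, hTk₀]
  have hT0 : 0 < T := by rw [hTk₀']; exact htpos k₀ hk₀D
  have hT1 : T < 1 := by rw [hTk₀']; exact htlt k₀ hk₀D
  have hTle : ∀ i ∈ D, T ≤ t i := fun i hi => Finset.inf'_le t hi
  set y : V := b + T • (v - b) with hydef
  have hyi : ∀ i, (⟪e i, y⟫ : ℝ) = ⟪e i, b⟫ + T * (⟪e i, v⟫ - ⟪e i, b⟫) := by
    intro i
    rw [hydef, inner_add_right, real_inner_smul_right, inner_sub_right]
  have hyD : ∀ i ∈ D, (⟪e i, y⟫ : ℝ) = (⟪e i, b⟫ - ⟪e i, v⟫) * (t i - T) := by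
    intro i hi
    have hd' : (⟪e i, b⟫ : ℝ) - ⟪e i, v⟫ ≠ 0 := ne_of_gt (hdenom i hi)
    have hti : t i = ⟪e i, b⟫ / (⟪e i, b⟫ - ⟪e i, v⟫) := rfl
    rw [hyi i, hti]
    field_simp
    ring
  have hyk₀ : (⟪e k₀, y⟫ : ℝ) = 0 := by
    rw [hyD k₀ hk₀D, hTk₀']
    ring
  have hynn : ∀ i, (0:ℝ) ≤ ⟪e i, y⟫ := by
    intro i
    by_cases hiD : i ∈ D
    · rw [hyD i hiD]
      exact mul_nonneg (hdenom i hiD).le (sub_nonneg.2 (hTle i hiD))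
    · have hiv : (0:ℝ) ≤ ⟪e i, v⟫ := by
        by_contra h
        exact hiD (by simp [hDdef]; linarith)
      rw [hyi i]
      nlinarith [hb i]
  -- parallelism of all hyperplanes through y with e k₀
  have hpar : ∀ i, (⟪e i, y⟫ : ℝ) = 0 → (⟪e i, v⟫ : ℝ) • e k₀ = (⟪e k₀, v⟫ : ℝ) • e i := by
    intro i hiy
    have e1 : (⟪e i, b⟫ : ℝ) + T * (⟪e i, v⟫ - ⟪e i, b⟫) = 0 := by rw [← hyi i]; exact hiy
    have e2 : (⟪e k₀, b⟫ : ℝ) + T * (⟪e k₀, v⟫ - ⟪e k₀, b⟫) = 0 := by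
      rw [← hyi k₀]; exact hyk₀
    have hkey : (1 - T) * ((⟪e i, v⟫ : ℝ) * ⟪e k₀, b⟫ - (⟪e k₀, v⟫ : ℝ) * ⟪e i, b⟫) = 0 := by
      linear_combination (⟪e i, v⟫ : ℝ) * e2 - (⟪e k₀, v⟫ : ℝ) * e1
    have hcross : (⟪e i, v⟫ : ℝ) * ⟪e k₀, b⟫ - (⟪e k₀, v⟫ : ℝ) * ⟪e i, b⟫ = 0 := by
      rcases mul_eq_zero.1 hkey with h | h
      · exfalso; linarith
      · exact h
    by_contra hne'
    have hwp : w (k₀, i) ≠ 0 := fun h0 => hne' (by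
      have := sub_eq_zero.1 h0
      exact this)
    have := hgen (k₀, i) hwp
    apply this
    rw [hwdef]
    simp only [inner_sub_left, real_inner_smul_left]
    linarith [hcross]
  -- open neighborhood condition
  set O : Set V := {z : V | ∀ i, (⟪e i, y⟫ : ℝ) ≠ 0 → (0:ℝ) < ⟪e i, z⟫} with hOdef
  have hOopen : IsOpen O := by
    have : O = ⋂ i, {z : V | (⟪e i, y⟫ : ℝ) ≠ 0 → (0:ℝ) < ⟪e i, z⟫} := by
      ext z; simp [hOdef, Set.mem_iInter]
    rw [this]
    apply isOpen_iInter_of_finite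
    intro i
    by_cases h0 : (⟪e i, y⟫ : ℝ) = 0
    · have : {z : V | (⟪e i, y⟫ : ℝ) ≠ 0 → (0:ℝ) < ⟪e i, z⟫} = Set.univ := by
        ext z; simp [h0]
      rw [this]; exact isOpen_univ
    · have : {z : V | (⟪e i, y⟫ : ℝ) ≠ 0 → (0:ℝ) < ⟪e i, z⟫} = {z : V | (0:ℝ) < ⟪e i, z⟫} := by
        ext z; simp [h0]
      rw [this]; exact isOpen_lt continuous_const (contInner _)
  have hyO : y ∈ O := fun i hi => lt_of_le_of_ne (hynn i) (Ne.symm hi)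
  obtain ⟨δ, hδpos, hδ⟩ := Metric.isOpen_iff.1 hOopen y hyO
  have hk₀v : (⟪e k₀, v⟫ : ℝ) < 0 := hmemD k₀ hk₀D
  -- points of the hyperplane near y are in B
  have hball : ∀ z : V, (⟪e k₀, z⟫ : ℝ) = 0 → dist z y < δ → z ∈ B := by
    intro z hz hdist
    rw [hBeq]
    intro i
    by_cases h0 : (⟪e i, y⟫ : ℝ) = 0
    · have hp := hpar i h0
      have : (⟪e i, v⟫ : ℝ) * ⟪e k₀, z⟫ = (⟪e k₀, v⟫ : ℝ) * ⟪e i, z⟫ := by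
        have := congrArg (fun u => (⟪u, z⟫ : ℝ)) hp
        simpa [real_inner_smul_left] using this
      rw [hz, mul_zero] at this
      have : (⟪e i, z⟫ : ℝ) = 0 := by
        rcases mul_eq_zero.1 this.symm with h | h
        · exact absurd h (ne_of_lt hk₀v)
        · exact h
      rw [this]
    · exact (hδ (Metric.mem_ball.2 hdist) i h0).le
  -- the span of the slice is the full hyperplane
  set φ : V →ₗ[ℝ] ℝ := (innerSL ℝ (e k₀)).toLinearMap with hφdef
  have hφapp : ∀ u : V, φ u = ⟪e k₀, u⟫ := fun u => rfl
  have hφne : φ ≠ 0 := by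
    intro h
    have : φ b = 0 := by rw [h]; rfl
    rw [hφapp] at this
    exact absurd this (ne_of_gt (hb k₀))
  have hspan : Submodule.span ℝ ({z : V | (⟪e k₀, z⟫ : ℝ) = 0} ∩ B) = LinearMap.ker φ := by
    apply le_antisymm
    · rw [Submodule.span_le]
      intro z hz
      rw [SetLike.mem_coe, LinearMap.mem_ker, hφapp]
      exact hz.1
    · intro u hu
      rw [LinearMap.mem_ker, hφapp] at hu
      have hyB : y ∈ ({z : V | (⟪e k₀, z⟫ : ℝ) = 0} ∩ B) :=
        ⟨hyk₀, hball y hyk₀ (by simpa using hδpos)⟩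
      set c : ℝ := δ / (2 * (‖u‖ + 1)) with hcdef
      have hcpos : 0 < c := by
        apply div_pos hδpos
        positivity
      have hzB : y + c • u ∈ ({z : V | (⟪e k₀, z⟫ : ℝ) = 0} ∩ B) := by
        constructor
        · show (⟪e k₀, y + c • u⟫ : ℝ) = 0
          rw [inner_add_right, real_inner_smul_right, hyk₀, hu]; ring
        · apply hball
          · show (⟪e k₀, y + c • u⟫ : ℝ) = 0
            rw [inner_add_right, real_inner_smul_right, hyk₀, hu]; ring
          · have : dist (y + c • u) y = c * ‖u‖ := by
              rw [dist_eq_norm]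
              simp [norm_smul, abs_of_pos hcpos]
            rw [this, hcdef]
            calc δ / (2 * (‖u‖ + 1)) * ‖u‖ < δ / (2 * (‖u‖ + 1)) * (2 * (‖u‖ + 1)) := by
                  apply mul_lt_mul_of_pos_left _ hcpos
                  nlinarith [norm_nonneg u]
              _ = δ := by field_simp
      have hmem1 : y ∈ Submodule.span ℝ ({z : V | (⟪e k₀, z⟫ : ℝ) = 0} ∩ B) :=
        Submodule.subset_span hyB
      have hmem2 : y + c • u ∈ Submodule.span ℝ ({z : V | (⟪e k₀, z⟫ : ℝ) = 0} ∩ B) :=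
        Submodule.subset_span hzB
      have hsub : c • u ∈ Submodule.span ℝ ({z : V | (⟪e k₀, z⟫ : ℝ) = 0} ∩ B) := by
        have := Submodule.sub_mem _ hmem2 hmem1
        simpa using this
      have := Submodule.smul_mem _ c⁻¹ hsub
      rwa [smul_smul, inv_mul_cancel₀ (ne_of_gt hcpos), one_smul] at this
  have hwall : IsWall e B k₀ := by
    unfold IsWall fdim
    rw [hspan]
    have := Module.Dual.finrank_ker_add_one_of_ne_zero hφne
    omega
  have := hv k₀ hwall
  linarith

end Aux

/-- `F ⊆ B` iff `F(H) ≥ 0` for every wall of `B` iff `F(H) ≥ 0` for every `H ∈ 𝒜`. -/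
theorem stmt7 (e : ι → V) (hne : ∀ i, e i ≠ 0) (B : Set V)
    (hB : IsRegion e B) (hBpos : ∀ i, B ⊆ posHalf e i)
    (F : Set V) (hF : IsFace e F) :
    ((F ⊆ B) ↔ (∀ i, IsWall e B i → 0 ≤ covec e F i)) ∧
    ((F ⊆ B) ↔ (∀ i, 0 ≤ covec e F i)) := by
  obtain ⟨hBeq, b₀, hb₀⟩ := base_char hB hBpos
  obtain ⟨hconv, hFne, hside⟩ := face_char hF
  have key : ∀ i, 0 ≤ covec e F i ↔ F ⊆ posHalf e i :=
    fun i => covec_nonneg_iff hconv hFne (hside i)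
  have hsecond : (F ⊆ B) ↔ (∀ i, 0 ≤ covec e F i) := by
    constructor
    · intro hFB i
      rw [key i]
      intro v hv
      have : v ∈ B := hFB hv
      rw [hBeq] at this
      exact this i
    · intro h v hv
      rw [hBeq]
      exact fun i => (key i).1 (h i) hv
  refine ⟨⟨fun hFB i _ => hsecond.1 hFB i, ?_⟩, hsecond⟩
  intro h v hv
  rw [hBeq]
  exact redundant hBeq hb₀ (fun i hw => (key i).1 (h i hw) hv)
end

section
/- Let F, G be faces of 𝒜 with F ≺ G strictly in the covector order, and suppose the separation set S(F,G) = {H ∈ 𝒜 : F(H) = −G(H) ≠ 0} is nonempty. Then there exists a face X of 𝒜 with F ≺ X ≺ G strictly in the covector order. -/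
open scoped RealInnerProductSpace Pointwise

variable {V : Type*} [NormedAddCommGroup V] [InnerProductSpace ℝ V] [FiniteDimensional ℝ V]
  {ι : Type*} [Fintype ι]

set_option linter.unusedSectionVars false

namespace Stmt10Aux


lemma aux_pos {a c : ℝ} (h : |c| < |a|) : 0 < a * (a + c) := by
  have ha : 0 < |a| := (abs_nonneg c).trans_lt h
  nlinarith [neg_abs_le (a * c), abs_mul a c, abs_mul_abs_self a,
    mul_lt_mul_of_pos_left h ha]

lemma transfer {a b c : ℝ} (hab : 0 < a * b) (hbc : 0 ≤ b * c) : 0 ≤ a * c := by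
  have hb : b ≠ 0 := by rintro rfl; simp at hab
  have hb2 : 0 < b * b := mul_self_pos.2 hb
  nlinarith [mul_nonneg hab.le hbc]

lemma mem_II_iff {X : Set V} {u : V} :
    u ∈ intrinsicInterior ℝ X ↔
      u ∈ affineSpan ℝ X ∧ ∃ U : Set V, IsOpen U ∧ u ∈ U ∧
        ∀ w ∈ U, w ∈ affineSpan ℝ X → w ∈ X := by
  constructor
  · rintro ⟨⟨u, hu⟩, huI, rfl⟩
    refine ⟨hu, ?_⟩
    obtain ⟨T, hTsub, hTopen, huT⟩ := mem_interior.1 huI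
    obtain ⟨U, hUopen, rfl⟩ := isOpen_induced_iff.1 hTopen
    exact ⟨U, hUopen, huT, fun w hwU hwspan =>
      hTsub (show (⟨w, hwspan⟩ : affineSpan ℝ X) ∈ _ from hwU)⟩
  · rintro ⟨huspan, U, hUopen, huU, hU⟩
    refine ⟨⟨u, huspan⟩, ?_, rfl⟩
    exact mem_interior.2 ⟨Subtype.val ⁻¹' U, fun w hw => hU w hw w.2,
      hUopen.preimage continuous_subtype_val, huU⟩

lemma extend {X : Set V} {u v : V} (hu : u ∈ intrinsicInterior ℝ X) (hv : v ∈ X) :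
    ∃ δ : ℝ, 0 < δ ∧ u + δ • (u - v) ∈ X := by
  rw [mem_II_iff] at hu
  obtain ⟨huspan, U, hUopen, huU, hU⟩ := hu
  have hvspan : v ∈ affineSpan ℝ X := subset_affineSpan ℝ X hv
  have hcont : Continuous fun t : ℝ => u + t • (u - v) := by continuity
  have hT : IsOpen ((fun t : ℝ => u + t • (u - v)) ⁻¹' U) := hUopen.preimage hcont
  have h0 : (0 : ℝ) ∈ (fun t : ℝ => u + t • (u - v)) ⁻¹' U := by simp [huU]
  obtain ⟨ε, hε, hball⟩ := Metric.isOpen_iff.1 hT 0 h0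
  refine ⟨ε / 2, by linarith, ?_⟩
  have hmem : (ε / 2 : ℝ) ∈ Metric.ball (0 : ℝ) ε := by
    rw [Metric.mem_ball, Real.dist_eq, sub_zero, abs_of_pos (by linarith : (0:ℝ) < ε / 2)]
    linarith
  have hspan : u + (ε / 2) • (u - v) ∈ affineSpan ℝ X := by
    have := AffineSubspace.smul_vsub_vadd_mem (affineSpan ℝ X) (ε / 2) huspan hvspan huspan
    simpa [vsub_eq_sub, vadd_eq_add, add_comm] using this
  exact hU _ (hball hmem) hspan

lemma relint_pos {a : V} {X : Set V} {u v : V} (hX : ∀ w ∈ X, 0 ≤ ⟪a, w⟫)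
    (hu : u ∈ intrinsicInterior ℝ X) (hv : v ∈ X) (hvpos : 0 < ⟪a, v⟫) :
    0 < ⟪a, u⟫ := by
  obtain ⟨δ, hδ, hw⟩ := extend hu hv
  have h1 := hX _ hw
  rw [inner_add_right, real_inner_smul_right, inner_sub_right] at h1
  have h2 := hX _ (intrinsicInterior_subset hu)
  nlinarith




lemma covec_eq_sign (e : ι → V) {X : Set V} {x : V}
    (hhalf : ∀ j, (∀ w ∈ X, 0 ≤ ⟪e j, w⟫) ∨ (∀ w ∈ X, ⟪e j, w⟫ ≤ 0))
    (hx : x ∈ intrinsicInterior ℝ X) (j : ι) :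
    covec e X j = SignType.sign (⟪e j, x⟫ : ℝ) := by
  have hxX : x ∈ X := intrinsicInterior_subset hx
  unfold covec
  split_ifs with h1 h2
  · exact (sign_pos (h1 x hx)).symm
  · exact (sign_neg (h2 x hx)).symm
  · push_neg at h1 h2
    obtain ⟨u, hu, hu0⟩ := h1
    obtain ⟨v, hv, hv0⟩ := h2
    have hx0 : (⟪e j, x⟫ : ℝ) = 0 := by
      rcases hhalf j with hp | hn
      · have hu0' : (⟪e j, u⟫ : ℝ) = 0 :=
          le_antisymm hu0 (hp u (intrinsicInterior_subset hu))
        by_contra hxne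
        have hxpos : (0:ℝ) < ⟪e j, x⟫ := lt_of_le_of_ne (hp x hxX) (Ne.symm hxne)
        have := relint_pos hp hu hxX hxpos
        rw [hu0'] at this; exact lt_irrefl 0 this
      · have hp' : ∀ w ∈ X, (0:ℝ) ≤ ⟪-e j, w⟫ := fun w hw => by
          rw [inner_neg_left]; linarith [hn w hw]
        have hv0' : (⟪e j, v⟫ : ℝ) = 0 :=
          le_antisymm (hn v (intrinsicInterior_subset hv)) hv0
        by_contra hxne
        have hxneg : (⟪e j, x⟫ : ℝ) < 0 := lt_of_le_of_ne (hn x hxX) hxne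
        have hxpos : (0:ℝ) < ⟪-e j, x⟫ := by rw [inner_neg_left]; linarith
        have := relint_pos hp' hv hxX hxpos
        rw [inner_neg_left, hv0'] at this
        simp at this
    rw [hx0, sign_zero]

/-- The closed chamber of a point `x` in the complement. -/
def cchamber (e : ι → V) (x : V) : Set V := {v | ∀ j, 0 ≤ (⟪e j, x⟫ : ℝ) * ⟪e j, v⟫}

def ochamber (e : ι → V) (x : V) : Set V := {v | ∀ j, 0 < (⟪e j, x⟫ : ℝ) * ⟪e j, v⟫}

lemma linmap (e : ι → V) (j : ι) (c : ℝ) :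
    IsLinearMap ℝ (fun v : V => c * (⟪e j, v⟫ : ℝ)) := by
  constructor
  · intro a b; rw [inner_add_right]; ring
  · intro r a; rw [real_inner_smul_right]; simp [smul_eq_mul]; ring

lemma ochamber_convex (e : ι → V) (x : V) : Convex ℝ (ochamber e x) := by
  have : ochamber e x = ⋂ j, {v : V | (0:ℝ) < ⟪e j, x⟫ * ⟪e j, v⟫} := by
    ext v; simp [ochamber, Set.mem_iInter]
  rw [this]
  exact convex_iInter fun j => convex_halfSpace_gt (linmap e j _) 0

lemma cchamber_convex (e : ι → V) (x : V) : Convex ℝ (cchamber e x) := by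
  have : cchamber e x = ⋂ j, {v : V | (0:ℝ) ≤ ⟪e j, x⟫ * ⟪e j, v⟫} := by
    ext v; simp [cchamber, Set.mem_iInter]
  rw [this]
  exact convex_iInter fun j => convex_halfSpace_ge (linmap e j _) 0

lemma cchamber_closed (e : ι → V) (x : V) : IsClosed (cchamber e x) := by
  have : cchamber e x = ⋂ j, {v : V | (0:ℝ) ≤ ⟪e j, x⟫ * ⟪e j, v⟫} := by
    ext v; simp [cchamber, Set.mem_iInter]
  rw [this]
  exact isClosed_iInter fun j => isClosed_le continuous_const
    (continuous_const.mul (continuous_const.inner continuous_id))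

lemma ochamber_sub (e : ι → V) (x : V) : ochamber e x ⊆ arrComplement e := by
  intro v hv j
  intro h
  have := hv j
  rw [h, mul_zero] at this
  exact lt_irrefl 0 this

lemma self_mem_ochamber {e : ι → V} {x : V} (hx : x ∈ arrComplement e) :
    x ∈ ochamber e x := fun j => mul_self_pos.2 (hx j)

lemma component_eq_ochamber {e : ι → V} {x : V} (hx : x ∈ arrComplement e) :
    connectedComponentIn (arrComplement e) x = ochamber e x := by
  apply subset_antisymm
  · intro v hv j
    by_contra h
    push_neg at h
    have hconn : IsPreconnected (connectedComponentIn (arrComplement e) x) :=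
      isPreconnected_connectedComponentIn
    set f : V → ℝ := fun w => ⟪e j, w⟫ with hf
    have hfc : Continuous f := continuous_const.inner continuous_id
    have himg : IsPreconnected (f '' connectedComponentIn (arrComplement e) x) :=
      hconn.image f hfc.continuousOn
    have hxm : f x ∈ f '' connectedComponentIn (arrComplement e) x :=
      Set.mem_image_of_mem f (mem_connectedComponentIn hx)
    have hvm : f v ∈ f '' connectedComponentIn (arrComplement e) x :=
      Set.mem_image_of_mem f hv
    have h0 : (0:ℝ) ∈ f '' connectedComponentIn (arrComplement e) x := by
      rcases lt_trichotomy (f x) 0 with hlt | heq | hgt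
      · have : (0:ℝ) ≤ f v := by nlinarith
        exact himg.Icc_subset hxm hvm ⟨hlt.le, this⟩
      · exact absurd heq (hx j)
      · have : f v ≤ 0 := by nlinarith
        exact himg.Icc_subset hvm hxm ⟨this, hgt.le⟩
    obtain ⟨w, hw, hw0⟩ := h0
    exact (connectedComponentIn_subset (arrComplement e) x hw j) hw0
  · exact ((ochamber_convex e x).isPreconnected).subset_connectedComponentIn
      (self_mem_ochamber hx) (ochamber_sub e x)

lemma closure_ochamber {e : ι → V} {x : V} (hx : x ∈ arrComplement e) :
    closure (ochamber e x) = cchamber e x := by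
  apply subset_antisymm
  · exact closure_minimal (fun v hv j => (hv j).le) (cchamber_closed e x)
  · intro v hv
    have htend : Filter.Tendsto (fun n : ℕ => v + (1 / (n + 1) : ℝ) • (x - v))
        Filter.atTop (nhds v) := by
      have h1 : Filter.Tendsto (fun n : ℕ => (1 / (n + 1) : ℝ)) Filter.atTop (nhds 0) :=
        tendsto_one_div_add_atTop_nhds_zero_nat
      have := (h1.smul_const (x - v)).const_add v
      simpa using this
    refine mem_closure_of_tendsto htend (Filter.Eventually.of_forall fun n => ?_)
    intro j
    have ht0 : (0:ℝ) < 1 / (n + 1) := by positivity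
    have ht1 : (1 / (n + 1) : ℝ) ≤ 1 := by
      rw [div_le_one (by positivity)]; simp
    have hj := hv j
    have hx2 : (0:ℝ) < ⟪e j, x⟫ * ⟪e j, x⟫ := mul_self_pos.2 (hx j)
    rw [inner_add_right, real_inner_smul_right, inner_sub_right]
    nlinarith

lemma region_eq {e : ι → V} {R : Set V} (hR : IsRegion e R) :
    ∃ x, x ∈ arrComplement e ∧ R = cchamber e x := by
  obtain ⟨x, hx, rfl⟩ := hR
  exact ⟨x, hx, by rw [component_eq_ochamber hx, closure_ochamber hx]⟩

lemma zero_mem_cchamber (e : ι → V) (x : V) : (0 : V) ∈ cchamber e x := by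
  intro j; rw [inner_zero_right, mul_zero]

lemma face_nonempty {e : ι → V} {F : Set V} (hF : IsFace e F) : F.Nonempty := by
  obtain ⟨Rs, hne, hreg, rfl⟩ := hF
  refine ⟨0, ?_⟩
  rintro R hR
  obtain ⟨x, hx, rfl⟩ := region_eq (hreg R hR)
  exact zero_mem_cchamber e x

lemma face_convex {e : ι → V} {F : Set V} (hF : IsFace e F) : Convex ℝ F := by
  obtain ⟨Rs, hne, hreg, rfl⟩ := hF
  apply convex_sInter
  intro R hR
  obtain ⟨x, hx, rfl⟩ := region_eq (hreg R hR)
  exact cchamber_convex e x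

lemma face_half {e : ι → V} {F : Set V} (hF : IsFace e F) (j : ι) :
    (∀ w ∈ F, (0:ℝ) ≤ ⟪e j, w⟫) ∨ (∀ w ∈ F, (⟪e j, w⟫:ℝ) ≤ 0) := by
  obtain ⟨Rs, ⟨R₀, hR₀⟩, hreg, rfl⟩ := hF
  obtain ⟨x, hx, hRx⟩ := region_eq (hreg R₀ hR₀)
  have hsub : ⋂₀ Rs ⊆ cchamber e x := by
    rw [← hRx]; exact Set.sInter_subset_of_mem hR₀
  rcases (hx j).lt_or_gt with hc | hc
  · right; intro w hw
    have := hsub hw j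
    nlinarith
  · left; intro w hw
    have := hsub hw j
    nlinarith


lemma st_le_one (s : SignType) : s ≤ 1 := by cases s <;> decide
lemma st_neg_one_le (s : SignType) : -1 ≤ s := by cases s <;> decide

lemma sign_mid {a b c t : ℝ} (ht0 : 0 < t) (ht1 : t < 1) (hc : c = (1-t)*a + t*b)
    (hba : SignType.sign b ≤ SignType.sign a) :
    SignType.sign c ≤ SignType.sign a ∧ SignType.sign b ≤ SignType.sign c := by
  rcases lt_trichotomy a 0 with ha|ha|ha <;> rcases lt_trichotomy b 0 with hb|hb|hb
  · have hcneg : c < 0 := by nlinarith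
    rw [sign_neg ha, sign_neg hcneg, sign_neg hb]; exact ⟨le_refl _, le_refl _⟩
  · rw [sign_neg ha, hb, sign_zero] at hba; exact absurd hba (by decide)
  · rw [sign_neg ha, sign_pos hb] at hba; exact absurd hba (by decide)
  · have hcneg : c < 0 := by nlinarith
    rw [ha, sign_zero, sign_neg hcneg, sign_neg hb]
    exact ⟨by decide, le_refl _⟩
  · have hc0 : c = 0 := by rw [hc, ha, hb]; ring
    rw [ha, hb, hc0, sign_zero]; exact ⟨le_refl _, le_refl _⟩
  · rw [ha, sign_zero, sign_pos hb] at hba; exact absurd hba (by decide)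
  · rw [sign_pos ha, sign_neg hb]
    exact ⟨st_le_one _, st_neg_one_le _⟩
  · have hcpos : 0 < c := by nlinarith
    rw [sign_pos ha, sign_pos hcpos, hb, sign_zero]
    exact ⟨le_refl _, by decide⟩
  · have hcpos : 0 < c := by nlinarith
    rw [sign_pos ha, sign_pos hcpos, sign_pos hb]
    exact ⟨le_refl _, le_refl _⟩

/-- Key construction: the face containing `z` in its relative interior. -/
lemma exists_face (e : ι → V) {w : V} (hw : w ∈ arrComplement e) (z : V) :
    ∃ X, IsFace e X ∧ ∀ j, covec e X j = SignType.sign (⟪e j, z⟫ : ℝ) := by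
  -- choose δ
  have hδev : ∀ᶠ δ in nhdsWithin (0:ℝ) (Set.Ioi 0),
      (0 < δ ∧ ∀ j, (⟪e j, z⟫:ℝ) ≠ 0 → δ * |(⟪e j, w⟫:ℝ)| < |(⟪e j, z⟫:ℝ)|) := by
    refine Filter.Eventually.and ?_ ?_
    · filter_upwards [self_mem_nhdsWithin] with δ hδ using hδ
    · rw [Filter.eventually_all]
      intro j
      by_cases hj : (⟪e j, z⟫:ℝ) = 0
      · exact Filter.Eventually.of_forall fun δ hne => absurd hj hne
      · have habs : (0:ℝ) < |(⟪e j, z⟫:ℝ)| := abs_pos.2 hj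
        have htend : Filter.Tendsto (fun δ : ℝ => δ * |(⟪e j, w⟫:ℝ)|)
            (nhdsWithin (0:ℝ) (Set.Ioi 0)) (nhds 0) := by
          have h := (continuous_mul_right (|(⟪e j, w⟫:ℝ)|)).tendsto (0:ℝ)
          rw [zero_mul] at h
          exact h.mono_left nhdsWithin_le_nhds
        exact (htend.eventually_lt_const habs).mono fun δ h _ => h
  obtain ⟨δ, hδpos, hδ⟩ := hδev.exists
  set p := z + δ • w with hp_def
  set q := z - δ • w with hq_def
  have hpj : ∀ j, (⟪e j, p⟫:ℝ) = ⟪e j, z⟫ + δ * ⟪e j, w⟫ := fun j => by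
    rw [hp_def, inner_add_right, real_inner_smul_right]
  have hqj : ∀ j, (⟪e j, q⟫:ℝ) = ⟪e j, z⟫ - δ * ⟪e j, w⟫ := fun j => by
    rw [hq_def, inner_sub_right, real_inner_smul_right]
  have habsδ : ∀ j, (⟪e j, z⟫:ℝ) ≠ 0 → |δ * (⟪e j, w⟫:ℝ)| < |(⟪e j, z⟫:ℝ)| := by
    intro j hj
    rw [abs_mul, abs_of_pos hδpos]
    exact hδ j hj
  have hppos : ∀ j, (⟪e j, z⟫:ℝ) ≠ 0 → 0 < (⟪e j, z⟫:ℝ) * ⟪e j, p⟫ := by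
    intro j hj
    rw [hpj j]
    exact aux_pos (habsδ j hj)
  have hqpos : ∀ j, (⟪e j, z⟫:ℝ) ≠ 0 → 0 < (⟪e j, z⟫:ℝ) * ⟪e j, q⟫ := by
    intro j hj
    rw [hqj j]
    have h1 : |-(δ * (⟪e j, w⟫:ℝ))| < |(⟪e j, z⟫:ℝ)| := by rw [abs_neg]; exact habsδ j hj
    simpa [sub_eq_add_neg] using aux_pos h1
  have hδw : ∀ j, δ * (⟪e j, w⟫:ℝ) ≠ 0 := fun j => mul_ne_zero (ne_of_gt hδpos) (hw j)
  have hp : p ∈ arrComplement e := by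
    intro j
    by_cases hj : (⟪e j, z⟫:ℝ) = 0
    · rw [hpj j, hj, zero_add]; exact hδw j
    · intro h0
      have := hppos j hj
      rw [h0, mul_zero] at this
      exact lt_irrefl 0 this
  have hq : q ∈ arrComplement e := by
    intro j
    by_cases hj : (⟪e j, z⟫:ℝ) = 0
    · rw [hqj j, hj, zero_sub]; exact neg_ne_zero.2 (hδw j)
    · intro h0
      have := hqpos j hj
      rw [h0, mul_zero] at this
      exact lt_irrefl 0 this
  set X := cchamber e p ∩ cchamber e q with hX_def
  have hXface : IsFace e X := by
    refine ⟨{closure (connectedComponentIn (arrComplement e) p),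
             closure (connectedComponentIn (arrComplement e) q)},
      ⟨_, Or.inl rfl⟩, ?_, ?_⟩
    · rintro R hR
      rcases hR with rfl | rfl
      · exact ⟨p, hp, rfl⟩
      · exact ⟨q, hq, rfl⟩
    · rw [Set.sInter_pair, component_eq_ochamber hp, closure_ochamber hp,
        component_eq_ochamber hq, closure_ochamber hq]
  have hXQ : X = {v : V | ∀ j, ((⟪e j, z⟫:ℝ) = 0 → (⟪e j, v⟫:ℝ) = 0) ∧
      ((⟪e j, z⟫:ℝ) ≠ 0 → 0 ≤ (⟪e j, z⟫:ℝ) * ⟪e j, v⟫)} := by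
    ext v
    constructor
    · rintro ⟨hpv, hqv⟩ j
      constructor
      · intro hj
        have h1 := hpv j
        have h2 := hqv j
        rw [hpj j, hj, zero_add] at h1
        rw [hqj j, hj, zero_sub] at h2
        have : δ * (⟪e j, w⟫:ℝ) * ⟪e j, v⟫ = 0 := by nlinarith
        rcases mul_eq_zero.1 this with h | h
        · exact absurd h (hδw j)
        · exact h
      · intro hj
        exact transfer (hppos j hj) (hpv j)
    · intro hv
      constructor <;> intro j
      · by_cases hj : (⟪e j, z⟫:ℝ) = 0
        · rw [(hv j).1 hj, mul_zero]
        · exact transfer (by rw [mul_comm]; exact hppos j hj) ((hv j).2 hj)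
      · by_cases hj : (⟪e j, z⟫:ℝ) = 0
        · rw [(hv j).1 hj, mul_zero]
        · exact transfer (by rw [mul_comm]; exact hqpos j hj) ((hv j).2 hj)
  have hzX : z ∈ X := by
    rw [hXQ]
    intro j
    exact ⟨fun hj => hj, fun _ => le_of_lt (mul_self_pos.2 (by assumption))⟩
  -- the kernel submodule
  let K : Submodule ℝ V :=
    { carrier := {v : V | ∀ j, (⟪e j, z⟫:ℝ) = 0 → (⟪e j, v⟫:ℝ) = 0}
      add_mem' := fun ha hb j hj => by
        rw [inner_add_right]
        rw [ha j hj, hb j hj, add_zero]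
      zero_mem' := fun j _ => inner_zero_right _
      smul_mem' := fun c v hv j hj => by
        rw [real_inner_smul_right, hv j hj, mul_zero] }
  have hXK : affineSpan ℝ X ≤ K.toAffineSubspace := by
    rw [affineSpan_le]
    intro v hv
    rw [hXQ] at hv
    show v ∈ K.toAffineSubspace
    rw [Submodule.mem_toAffineSubspace]
    exact fun j hj => (hv j).1 hj
  have hzrel : z ∈ intrinsicInterior ℝ X := by
    rw [mem_II_iff]
    refine ⟨subset_affineSpan ℝ X hzX,
      {v : V | ∀ j, (⟪e j, z⟫:ℝ) ≠ 0 → 0 < (⟪e j, z⟫:ℝ) * ⟪e j, v⟫}, ?_, ?_, ?_⟩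
    · have : {v : V | ∀ j, (⟪e j, z⟫:ℝ) ≠ 0 → 0 < (⟪e j, z⟫:ℝ) * ⟪e j, v⟫} =
          ⋂ j, {v : V | (⟪e j, z⟫:ℝ) ≠ 0 → 0 < (⟪e j, z⟫:ℝ) * ⟪e j, v⟫} := by
        ext v; simp [Set.mem_iInter]
      rw [this]
      refine isOpen_iInter_of_finite fun j => ?_
      by_cases hj : (⟪e j, z⟫:ℝ) = 0
      · simp [hj]
      · have : {v : V | (⟪e j, z⟫:ℝ) ≠ 0 → 0 < (⟪e j, z⟫:ℝ) * ⟪e j, v⟫} =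
            {v : V | 0 < (⟪e j, z⟫:ℝ) * ⟪e j, v⟫} := by
          ext v; simp [hj]
        rw [this]
        exact isOpen_lt continuous_const
          (continuous_const.mul (continuous_const.inner continuous_id))
    · intro j hj
      exact mul_self_pos.2 hj
    · intro v hvU hvspan
      rw [hXQ]
      intro j
      have hvK : v ∈ K := Submodule.mem_toAffineSubspace.1 (hXK hvspan)
      exact ⟨fun hj => hvK j hj, fun hj => (hvU j hj).le⟩
  exact ⟨X, hXface, fun j => covec_eq_sign e (face_half hXface) hzrel j⟩

end Stmt10Aux

set_option linter.unusedVariables false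

open Stmt10Aux

/-- If `F ≺ G` strictly in the covector order and the separation set of `F` and `G`
is nonempty, then there is a face strictly between `F` and `G` in the covector order. -/
theorem stmt10 (e : ι → V) (hne : ∀ i, e i ≠ 0) (B : Set V)
    (hB : IsRegion e B) (hBpos : ∀ i, B ⊆ posHalf e i)
    (F G : Set V) (hF : IsFace e F) (hG : IsFace e G)
    (hle : ∀ i, covec e G i ≤ covec e F i) (hFG : F ≠ G)
    (hsep : ∃ i, covec e F i = -(covec e G i) ∧ covec e F i ≠ 0) :
    ∃ X, IsFace e X ∧ X ≠ F ∧ X ≠ G ∧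
      (∀ i, covec e X i ≤ covec e F i) ∧ (∀ i, covec e G i ≤ covec e X i) := by
  classical
  obtain ⟨i₀, hs1, hs2⟩ := hsep
  obtain ⟨x, hx⟩ := Set.Nonempty.intrinsicInterior (face_convex hF) (face_nonempty hF)
  obtain ⟨y, hy⟩ := Set.Nonempty.intrinsicInterior (face_convex hG) (face_nonempty hG)
  have hcovF : ∀ j, covec e F j = SignType.sign (⟪e j, x⟫ : ℝ) :=
    fun j => covec_eq_sign e (face_half hF) hx j
  have hcovG : ∀ j, covec e G j = SignType.sign (⟪e j, y⟫ : ℝ) :=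
    fun j => covec_eq_sign e (face_half hG) hy j
  have hFGi : covec e F i₀ = 1 ∧ covec e G i₀ = -1 := by
    have h := hle i₀
    cases hG0 : covec e G i₀ with
    | zero =>
      rw [hG0] at hs1; simp at hs1; exact absurd hs1 hs2
    | neg =>
      rw [hG0] at hs1; simp at hs1; exact ⟨hs1, rfl⟩
    | pos =>
      rw [hG0] at hs1 h; rw [hs1] at h; exact absurd h (by decide)
  obtain ⟨hFi, hGi⟩ := hFGi
  have hax : (0:ℝ) < ⟪e i₀, x⟫ := sign_eq_one_iff.1 (by rw [← hcovF i₀, hFi])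
  have hby : (⟪e i₀, y⟫:ℝ) < 0 := sign_eq_neg_one_iff.1 (by rw [← hcovG i₀, hGi])
  have hden : (0:ℝ) < ⟪e i₀, x⟫ - ⟪e i₀, y⟫ := by linarith
  set t : ℝ := ⟪e i₀, x⟫ / (⟪e i₀, x⟫ - ⟪e i₀, y⟫) with ht_def
  have ht0 : 0 < t := div_pos hax hden
  have ht1 : t < 1 := by rw [div_lt_one hden]; linarith
  set z := x + t • (y - x) with hz_def
  have hcj : ∀ j, (⟪e j, z⟫:ℝ) = (1-t)*⟪e j, x⟫ + t*⟪e j, y⟫ := fun j => by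
    rw [hz_def, inner_add_right, real_inner_smul_right, inner_sub_right]; ring
  have hzi0 : (⟪e i₀, z⟫:ℝ) = 0 := by
    rw [hcj i₀, ht_def]
    field_simp
    ring
  obtain ⟨w, hw, -⟩ := hB
  obtain ⟨X, hXface, hXcov⟩ := exists_face e hw z
  have hXi0 : covec e X i₀ = 0 := by rw [hXcov i₀, hzi0, sign_zero]
  refine ⟨X, hXface, ?_, ?_, ?_, ?_⟩
  · intro h; rw [h, hFi] at hXi0; exact absurd hXi0 (by decide)
  · intro h; rw [h, hGi] at hXi0; exact absurd hXi0 (by decide)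
  · intro j
    rw [hXcov j, hcovF j]
    exact (sign_mid ht0 ht1 (hcj j) (by rw [← hcovF j, ← hcovG j]; exact hle j)).1
  · intro j
    rw [hXcov j, hcovG j]
    exact (sign_mid ht0 ht1 (hcj j) (by rw [← hcovF j, ← hcovG j]; exact hle j)).2
end

section
/- If F and G are both faces of the base region B (i.e. F ⊆ B and G ⊆ B), then F ⊇ G if and only if F ≤ G in the facial weak order FW(𝒜,B). Dually, if F and G are both faces of the opposite region −B, then F ⊆ G if and only if F ≤ G in FW(𝒜,B). -/
open scoped RealInnerProductSpace Pointwise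

variable {V : Type*} [NormedAddCommGroup V] [InnerProductSpace ℝ V] [FiniteDimensional ℝ V]
  {ι : Type*} [Fintype ι]

set_option linter.unusedSectionVars false

lemma posHalf_closed (e : ι → V) (i : ι) : IsClosed (posHalf e i) :=
  isClosed_Ici.preimage (inner_cont (e i))

lemma negHalf_closed (e : ι → V) (i : ι) : IsClosed (negHalf e i) :=
  isClosed_Iic.preimage (inner_cont (e i))

lemma region_sign (e : ι → V) {y : V} (hy : y ∈ arrComplement e) (i : ι) :
    (0 < ⟪e i, y⟫ → closure (connectedComponentIn (arrComplement e) y) ⊆ posHalf e i) ∧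
    (⟪e i, y⟫ < 0 → closure (connectedComponentIn (arrComplement e) y) ⊆ negHalf e i) := by
  set C := connectedComponentIn (arrComplement e) y with hCdef
  have hconn : IsPreconnected C := isPreconnected_connectedComponentIn
  have hsub : C ⊆ arrComplement e := connectedComponentIn_subset _ _
  have hyC : y ∈ C := mem_connectedComponentIn hy
  have key : ∀ a ∈ C, ∀ b ∈ C, 0 < ⟪e i, a⟫ → ⟪e i, b⟫ < 0 → False := by
    intro a ha b hb hpa hnb
    have : (0:ℝ) ∈ Set.Icc ⟪e i, b⟫ ⟪e i, a⟫ := ⟨hnb.le, hpa.le⟩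
    have him := hconn.intermediate_value hb ha (inner_cont (e i)).continuousOn this
    obtain ⟨w, hwC, hw0⟩ := him
    exact hsub hwC i hw0
  constructor
  · intro hpos
    apply closure_minimal ?_ (posHalf_closed e i)
    intro z hz
    by_contra h
    simp only [posHalf, Set.mem_setOf_eq, not_le] at h
    exact key y hyC z hz hpos h
  · intro hneg
    apply closure_minimal ?_ (negHalf_closed e i)
    intro z hz
    by_contra h
    simp only [negHalf, Set.mem_setOf_eq, not_le] at h
    exact key z hz y hyC h hneg

lemma cell_subset (e : ι → V) {y f : V} (hy : y ∈ arrComplement e)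
    (h : ∀ i, (0 < ⟪e i, y⟫ → 0 ≤ ⟪e i, f⟫) ∧ (⟪e i, y⟫ < 0 → ⟪e i, f⟫ ≤ 0)) :
    f ∈ closure (connectedComponentIn (arrComplement e) y) := by
  set g : ℝ → V := fun t => f + t • (y - f) with hg
  have hinner : ∀ i t, ⟪e i, g t⟫ = (1 - t) * ⟪e i, f⟫ + t * ⟪e i, y⟫ := by
    intro i t
    simp only [hg, inner_add_right, real_inner_smul_right, inner_sub_right]
    ring
  have hS : ∀ t ∈ Set.Ioc (0:ℝ) 1, g t ∈ arrComplement e := by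
    intro t ht i
    rcases lt_or_gt_of_ne (hy i) with hn | hp
    · have : ⟪e i, g t⟫ < 0 := by
        rw [hinner]
        have h1 : (1 - t) * ⟪e i, f⟫ ≤ 0 :=
          mul_nonpos_iff.mpr (Or.inl ⟨by linarith [ht.2], (h i).2 hn⟩)
        nlinarith [ht.1, ht.2]
      exact this.ne
    · have : 0 < ⟪e i, g t⟫ := by
        rw [hinner]
        have h1 : 0 ≤ (1 - t) * ⟪e i, f⟫ :=
          mul_nonneg (by linarith [ht.2]) ((h i).1 hp)
        nlinarith [ht.1]
      exact this.ne'
  have hgc : Continuous g := by continuity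
  have hpre : IsPreconnected (g '' Set.Ioc 0 1) :=
    isPreconnected_Ioc.image g hgc.continuousOn
  have hyS : y ∈ g '' Set.Ioc 0 1 := ⟨1, ⟨zero_lt_one, le_refl 1⟩, by simp [hg]⟩
  have hsub : g '' Set.Ioc 0 1 ⊆ connectedComponentIn (arrComplement e) y :=
    hpre.subset_connectedComponentIn hyS (fun z ⟨t, ht, hz⟩ => hz ▸ hS t ht)
  have hf : f ∈ closure (g '' Set.Ioc 0 1) := by
    have h0 : (0:ℝ) ∈ closure (Set.Ioc (0:ℝ) 1) := by
      rw [closure_Ioc one_ne_zero.symm]; exact ⟨le_refl 0, zero_le_one⟩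
    have := image_closure_subset_closure_image hgc (s := Set.Ioc (0:ℝ) 1)
    have hmem : g 0 ∈ g '' closure (Set.Ioc (0:ℝ) 1) := ⟨0, h0, rfl⟩
    have : g 0 ∈ closure (g '' Set.Ioc 0 1) := this hmem
    simpa [hg] using this
  exact closure_mono hsub hf




lemma gen_mem (e : ι → V) {y : V} (hy : y ∈ arrComplement e) :
    y ∈ closure (connectedComponentIn (arrComplement e) y) :=
  subset_closure (mem_connectedComponentIn hy)

lemma sep_mem_iff (e : ι → V) {B : Set V} {yB : V} (hyB : yB ∈ arrComplement e)
    (hBeq : B = closure (connectedComponentIn (arrComplement e) yB))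
    (hBpos : ∀ i, B ⊆ posHalf e i)
    (R : Set V) (i : ι) : i ∈ sepSet e B R ↔ R ⊆ negHalf e i := by
  constructor
  · rintro (⟨_, h⟩ | ⟨hBneg, _⟩)
    · exact h
    · exfalso
      have hm : yB ∈ B := hBeq ▸ gen_mem e hyB
      exact hyB i (le_antisymm (hBneg hm) (hBpos i hm))
  · exact fun h => Or.inl ⟨hBpos i, h⟩

lemma sep_self (e : ι → V) {B : Set V} {yB : V} (hyB : yB ∈ arrComplement e)
    (hBeq : B = closure (connectedComponentIn (arrComplement e) yB))
    (hBpos : ∀ i, B ⊆ posHalf e i) : sepSet e B B = ∅ := by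
  ext i
  simp only [Set.mem_empty_iff_false, iff_false]
  intro hi
  rw [sep_mem_iff e hyB hBeq hBpos] at hi
  have hm : yB ∈ B := hBeq ▸ gen_mem e hyB
  exact hyB i (le_antisymm (hi hm) (hBpos i hm))

/-- Key helper: construct a point whose inner products vanish on `Z` and dominate
those of `yB` off `Z`. -/
lemma exists_point (e : ι → V) (yB : V) (Z : Set ι)
    (h : ∀ i ∉ Z, ∃ u : V, (∀ j, 0 ≤ ⟪e j, u⟫) ∧ (∀ j ∈ Z, ⟪e j, u⟫ = 0) ∧ 0 < ⟪e i, u⟫) :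
    ∃ x : V, (∀ j ∈ Z, ⟪e j, x⟫ = 0) ∧ (∀ j ∉ Z, ⟪e j, yB⟫ < ⟪e j, x⟫) := by
  have h' : ∀ i : ι, ∃ u : V, (∀ j, 0 ≤ ⟪e j, u⟫) ∧ (∀ j ∈ Z, ⟪e j, u⟫ = 0) ∧
      (i ∉ Z → 0 < ⟪e i, u⟫) := by
    intro i
    by_cases hi : i ∈ Z
    · exact ⟨0, fun j => by simp, fun j _ => by simp, fun h' => absurd hi h'⟩
    · obtain ⟨u, h1, h2, h3⟩ := h i hi
      exact ⟨u, h1, h2, fun _ => h3⟩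
  choose u hu1 hu2 hu3 using h'
  set x0 : V := ∑ i, u i with hx0
  have hin : ∀ j, ⟪e j, x0⟫ = ∑ i, ⟪e j, u i⟫ := fun j => inner_sum _ _ _
  have hx01 : ∀ j, 0 ≤ ⟪e j, x0⟫ := fun j => by
    rw [hin]; exact Finset.sum_nonneg fun i _ => hu1 i j
  have hx02 : ∀ j ∈ Z, ⟪e j, x0⟫ = 0 := fun j hj => by
    rw [hin]; exact Finset.sum_eq_zero fun i _ => hu2 i j hj
  have hx03 : ∀ j ∉ Z, 0 < ⟪e j, x0⟫ := fun j hj => by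
    rw [hin]
    exact Finset.sum_pos' (fun i _ => hu1 i j) ⟨j, Finset.mem_univ j, hu3 j hj⟩
  have hev : ∀ᶠ c : ℝ in Filter.atTop, ∀ i, i ∉ Z → ⟪e i, yB⟫ < c * ⟪e i, x0⟫ := by
    rw [Filter.eventually_all]
    intro i
    by_cases hi : i ∈ Z
    · filter_upwards with c h' ; exact absurd hi h'
    · have ht : Filter.Tendsto (fun c : ℝ => c * ⟪e i, x0⟫) Filter.atTop Filter.atTop :=
        Filter.tendsto_id.atTop_mul_const (hx03 i hi)
      filter_upwards [ht.eventually_gt_atTop ⟪e i, yB⟫] with c hc _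
      exact hc
  obtain ⟨c, hc⟩ := hev.exists
  refine ⟨c • x0, fun j hj => ?_, fun j hj => ?_⟩
  · rw [real_inner_smul_right, hx02 j hj, mul_zero]
  · rw [real_inner_smul_right]; exact hc j hj


lemma interval_pos (e : ι → V) {B : Set V} {yB : V} (hyB : yB ∈ arrComplement e)
    (hBeq : B = closure (connectedComponentIn (arrComplement e) yB))
    (hBpos : ∀ i, B ⊆ posHalf e i) (F : Set V) (hF : F ⊆ B) :
    ∃ M, IsFacialInterval e B F B M ∧
      sepSet e B M = {i | ∀ x ∈ F, ⟪e i, x⟫ = 0} := by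
  set Z : Set ι := {i | ∀ x ∈ F, ⟪e i, x⟫ = 0} with hZ
  have hyBpos : ∀ i, 0 < ⟪e i, yB⟫ := fun i =>
    lt_of_le_of_ne (hBpos i (hBeq ▸ gen_mem e hyB)) (Ne.symm (hyB i))
  obtain ⟨x, hx1, hx2⟩ := exists_point e yB Z (by
    intro i hi
    simp only [hZ, Set.mem_setOf_eq, not_forall] at hi
    obtain ⟨w, hw, hwne⟩ := hi
    refine ⟨w, fun j => hBpos j (hF hw), fun j hj => hj w hw, ?_⟩
    exact lt_of_le_of_ne (hBpos i (hF hw)) (Ne.symm hwne))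
  set v : V := x - yB with hv
  have hvsign : ∀ i, (i ∈ Z → ⟪e i, v⟫ < 0) ∧ (i ∉ Z → 0 < ⟪e i, v⟫) := by
    intro i
    constructor
    · intro hi
      rw [hv, inner_sub_right, hx1 i hi]
      simpa using hyBpos i
    · intro hi
      rw [hv, inner_sub_right]
      have := hx2 i hi
      linarith
  have hvc : v ∈ arrComplement e := by
    intro i
    by_cases hi : i ∈ Z
    · exact ((hvsign i).1 hi).ne
    · exact ((hvsign i).2 hi).ne'
  set M : Set V := closure (connectedComponentIn (arrComplement e) v) with hM
  have hMreg : IsRegion e M := ⟨v, hvc, rfl⟩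
  have hsepM : sepSet e B M = Z := by
    ext i
    rw [sep_mem_iff e hyB hBeq hBpos]
    constructor
    · intro hMneg
      by_contra hi
      have := hMneg (hM ▸ gen_mem e hvc)
      exact absurd this (not_le.mpr ((hvsign i).2 hi))
    · intro hi
      exact (region_sign e hvc i).2 ((hvsign i).1 hi)
  refine ⟨M, ⟨⟨yB, hyB, hBeq⟩, hMreg, ?_⟩, hsepM⟩
  intro R hR
  obtain ⟨yR, hyR, rfl⟩ := hR
  constructor
  · intro hFR
    refine ⟨by rw [PRle, sep_self e hyB hBeq hBpos]; exact Set.empty_subset _, ?_⟩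
    intro i hi
    rw [sep_mem_iff e hyB hBeq hBpos] at hi
    rw [hsepM]
    intro f hf
    exact le_antisymm (hi (hFR hf)) (hBpos i (hF hf))
  · rintro ⟨-, hRM⟩
    intro f hf
    apply cell_subset e hyR
    intro i
    refine ⟨fun _ => hBpos i (hF hf), fun hneg => ?_⟩
    have hRneg : closure (connectedComponentIn (arrComplement e) yR) ⊆ negHalf e i :=
      (region_sign e hyR i).2 hneg
    have hi : i ∈ sepSet e B M :=
      hRM ((sep_mem_iff e hyB hBeq hBpos _ i).mpr hRneg)
    rw [hsepM] at hi
    exact (hi f hf).le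

lemma interval_neg (e : ι → V) {B : Set V} {yB : V} (hyB : yB ∈ arrComplement e)
    (hBeq : B = closure (connectedComponentIn (arrComplement e) yB))
    (hBpos : ∀ i, B ⊆ posHalf e i) (F : Set V) (hF : ∀ i, ∀ x ∈ F, ⟪e i, x⟫ ≤ 0) :
    ∃ m, IsFacialInterval e B F m
        (closure (connectedComponentIn (arrComplement e) (-yB))) ∧
      sepSet e B m = {i | ¬ ∀ x ∈ F, ⟪e i, x⟫ = 0} := by
  set Z : Set ι := {i | ∀ x ∈ F, ⟪e i, x⟫ = 0} with hZ
  have hyBpos : ∀ i, 0 < ⟪e i, yB⟫ := fun i =>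
    lt_of_le_of_ne (hBpos i (hBeq ▸ gen_mem e hyB)) (Ne.symm (hyB i))
  have hnyB : -yB ∈ arrComplement e := by
    intro i
    rw [inner_neg_right]
    exact (neg_lt_zero.mpr (hyBpos i)).ne
  have hBneg' : ∀ i, closure (connectedComponentIn (arrComplement e) (-yB)) ⊆ negHalf e i :=
    fun i => (region_sign e hnyB i).2 (by rw [inner_neg_right]; exact neg_lt_zero.mpr (hyBpos i))
  have hsepB' : ∀ i, i ∈ sepSet e B (closure (connectedComponentIn (arrComplement e) (-yB))) :=
    fun i => (sep_mem_iff e hyB hBeq hBpos _ i).mpr (hBneg' i)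
  obtain ⟨x, hx1, hx2⟩ := exists_point e yB Z (by
    intro i hi
    simp only [hZ, Set.mem_setOf_eq, not_forall] at hi
    obtain ⟨w, hw, hwne⟩ := hi
    refine ⟨-w, fun j => ?_, fun j hj => ?_, ?_⟩
    · rw [inner_neg_right]; exact neg_nonneg.mpr (hF j w hw)
    · rw [inner_neg_right, hj w hw, neg_zero]
    · rw [inner_neg_right]
      exact neg_pos.mpr (lt_of_le_of_ne (hF i w hw) hwne))
  set v : V := yB - x with hv
  have hvsign : ∀ i, (i ∈ Z → 0 < ⟪e i, v⟫) ∧ (i ∉ Z → ⟪e i, v⟫ < 0) := by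
    intro i
    constructor
    · intro hi
      rw [hv, inner_sub_right, hx1 i hi]
      simpa using hyBpos i
    · intro hi
      rw [hv, inner_sub_right]
      have := hx2 i hi
      linarith
  have hvc : v ∈ arrComplement e := by
    intro i
    by_cases hi : i ∈ Z
    · exact ((hvsign i).1 hi).ne'
    · exact ((hvsign i).2 hi).ne
  set m : Set V := closure (connectedComponentIn (arrComplement e) v) with hm
  have hmreg : IsRegion e m := ⟨v, hvc, rfl⟩
  have hsepm : sepSet e B m = {i | ¬ ∀ x ∈ F, ⟪e i, x⟫ = 0} := by
    ext i
    rw [sep_mem_iff e hyB hBeq hBpos]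
    constructor
    · intro hmneg hi
      have := hmneg (hm ▸ gen_mem e hvc)
      exact absurd this (not_le.mpr ((hvsign i).1 hi))
    · intro hi
      exact (region_sign e hvc i).2 ((hvsign i).2 hi)
  refine ⟨m, ⟨hmreg, ⟨-yB, hnyB, rfl⟩, ?_⟩, hsepm⟩
  intro R hR
  obtain ⟨yR, hyR, rfl⟩ := hR
  constructor
  · intro hFR
    refine ⟨?_, fun i _ => hsepB' i⟩
    intro i hi
    rw [hsepm] at hi
    simp only [Set.mem_setOf_eq, not_forall] at hi
    obtain ⟨w, hw, hwne⟩ := hi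
    have hwneg : ⟪e i, w⟫ < 0 := lt_of_le_of_ne (hF i w hw) hwne
    rw [sep_mem_iff e hyB hBeq hBpos]
    rcases lt_or_gt_of_ne (hyR i) with hn | hp
    · exact (region_sign e hyR i).2 hn
    · exfalso
      have := (region_sign e hyR i).1 hp (hFR hw)
      exact absurd this (not_le.mpr hwneg)
  · rintro ⟨hmR, -⟩
    intro f hf
    apply cell_subset e hyR
    intro i
    refine ⟨fun hpos => ?_, fun _ => hF i f hf⟩
    by_cases hi : i ∈ Z
    · exact (hi f hf).ge
    · exfalso
      have himem : i ∈ sepSet e B m := by rw [hsepm]; exact hi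
      have := hmR himem
      rw [sep_mem_iff e hyB hBeq hBpos] at this
      have := this (gen_mem e hyR)
      exact absurd this (not_le.mpr hpos)

/-- For faces of the base region `B`, reverse containment agrees with the facial weak
order; for faces of `-B`, containment agrees with the facial weak order. -/
theorem stmt11 (e : ι → V) (hne : ∀ i, e i ≠ 0) (B : Set V)
    (hB : IsRegion e B) (hBpos : ∀ i, B ⊆ posHalf e i) :
    (∀ F G, IsFace e F → IsFace e G → F ⊆ B → G ⊆ B → (G ⊆ F ↔ FWle e B F G)) ∧
    (∀ F G, IsFace e F → IsFace e G → F ⊆ -B → G ⊆ -B → (F ⊆ G ↔ FWle e B F G)) := by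
  obtain ⟨yB, hyB, hBeq⟩ := hB
  have hBreg : IsRegion e B := ⟨yB, hyB, hBeq⟩
  constructor
  · intro F G hFface hGface hFB hGB
    constructor
    · -- G ⊆ F → FWle
      intro hGF
      obtain ⟨MF, hintF, hsepF⟩ := interval_pos e hyB hBeq hBpos F hFB
      obtain ⟨MG, hintG, hsepG⟩ := interval_pos e hyB hBeq hBpos G hGB
      refine ⟨B, MF, B, MG, hintF, hintG, subset_rfl, ?_⟩
      rw [PRle, hsepF, hsepG]
      intro i hi w hw
      exact hi w (hGF hw)
    · -- FWle → G ⊆ F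
      rintro ⟨mF, MF, mG, MG, hintF, hintG, hmm, hMM⟩
      have hsepmG : sepSet e B mG = ∅ := by
        have h2 := (hintG.2.2 B hBreg).mp hGB
        have := h2.1
        rw [PRle, sep_self e hyB hBeq hBpos] at this
        exact Set.subset_empty_iff.mp this
      obtain ⟨Rs, hRsne, hRsreg, rfl⟩ := hFface
      intro g hg
      refine Set.mem_sInter.mpr fun R hR => ?_
      have hreg := hRsreg R hR
      have hFR : ⋂₀ Rs ⊆ R := Set.sInter_subset_of_mem hR
      have h1 := (hintF.2.2 R hreg).mp hFR
      refine (hintG.2.2 R hreg).mpr ⟨?_, h1.2.trans hMM⟩ hg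
      rw [PRle, hsepmG]
      exact Set.empty_subset _
  · intro F G hFface hGface hFB hGB
    have hFneg : ∀ i, ∀ x ∈ F, ⟪e i, x⟫ ≤ 0 := by
      intro i x hx
      have : -x ∈ B := Set.mem_neg.mp (hFB hx)
      have := hBpos i this
      simp only [posHalf, Set.mem_setOf_eq, inner_neg_right] at this
      linarith
    have hGneg : ∀ i, ∀ x ∈ G, ⟪e i, x⟫ ≤ 0 := by
      intro i x hx
      have : -x ∈ B := Set.mem_neg.mp (hGB hx)
      have := hBpos i this
      simp only [posHalf, Set.mem_setOf_eq, inner_neg_right] at this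
      linarith
    have hnyB : -yB ∈ arrComplement e := by
      intro i
      rw [inner_neg_right]
      have : 0 < ⟪e i, yB⟫ :=
        lt_of_le_of_ne (hBpos i (hBeq ▸ gen_mem e hyB)) (Ne.symm (hyB i))
      exact (neg_lt_zero.mpr this).ne
    set B' : Set V := closure (connectedComponentIn (arrComplement e) (-yB)) with hB'
    have hB'reg : IsRegion e B' := ⟨-yB, hnyB, rfl⟩
    have hsepB' : ∀ i, i ∈ sepSet e B B' := by
      intro i
      rw [sep_mem_iff e hyB hBeq hBpos]
      refine (region_sign e hnyB i).2 ?_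
      rw [inner_neg_right]
      exact neg_lt_zero.mpr (lt_of_le_of_ne (hBpos i (hBeq ▸ gen_mem e hyB)) (Ne.symm (hyB i)))
    constructor
    · -- F ⊆ G → FWle
      intro hFG
      obtain ⟨mF, hintF, hsepF⟩ := interval_neg e hyB hBeq hBpos F hFneg
      obtain ⟨mG, hintG, hsepG⟩ := interval_neg e hyB hBeq hBpos G hGneg
      refine ⟨mF, B', mG, B', hintF, hintG, ?_, subset_rfl⟩
      rw [PRle, hsepF, hsepG]
      intro i hi hcon
      exact hi fun w hw => hcon w (hFG hw)
    · -- FWle → F ⊆ G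
      rintro ⟨mF, MF, mG, MG, hintF, hintG, hmm, hMM⟩
      have hFB' : F ⊆ B' := by
        intro f hf
        apply cell_subset e hnyB
        intro i
        refine ⟨fun hpos => ?_, fun _ => hFneg i f hf⟩
        exfalso
        rw [inner_neg_right] at hpos
        have : 0 < ⟪e i, yB⟫ :=
          lt_of_le_of_ne (hBpos i (hBeq ▸ gen_mem e hyB)) (Ne.symm (hyB i))
        linarith
      have hsepMF : ∀ i, i ∈ sepSet e B MF := by
        have h2 := (hintF.2.2 B' hB'reg).mp hFB'
        intro i
        exact h2.2 (hsepB' i)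
      obtain ⟨Rs, hRsne, hRsreg, rfl⟩ := hGface
      intro f hf
      refine Set.mem_sInter.mpr fun R hR => ?_
      have hreg := hRsreg R hR
      have hGR : ⋂₀ Rs ⊆ R := Set.sInter_subset_of_mem hR
      have h1 := (hintG.2.2 R hreg).mp hGR
      refine (hintF.2.2 R hreg).mpr ⟨hmm.trans h1.1, ?_⟩ hf
      intro i _
      exact hsepMF i
end

section
/- The following are equivalent for two faces F, G of 𝒜: (i) F ⪯ G in the covector order; (ii) R(F) ∖ R(G) ⊆ Φ⁻ and R(G) ∖ R(F) ⊆ Φ⁺; (iii) R(F)⁺ ⊆ R(G)⁺ and R(F)⁻ ⊇ R(G)⁻. -/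
open scoped RealInnerProductSpace Pointwise

variable {V : Type*} [NormedAddCommGroup V] [InnerProductSpace ℝ V] [FiniteDimensional ℝ V]
  {ι : Type*} [Fintype ι]

section Aux13

set_option linter.unusedSectionVars false in
private lemma aux13_comp_eq (e : ι → V) {x : V} (hx : x ∈ arrComplement e) :
    connectedComponentIn (arrComplement e) x = {v | ∀ i, 0 < ⟪e i, x⟫ * ⟪e i, v⟫} := by
  set C : Set V := {v | ∀ i, 0 < ⟪e i, x⟫ * ⟪e i, v⟫} with hC
  have hlin : ∀ u : V, IsLinearMap ℝ (fun v : V => ⟪u, v⟫) :=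
    fun u => ⟨fun a b => inner_add_right u a b, fun c a => real_inner_smul_right u a c⟩
  have hCconv : Convex ℝ C := by
    have : C = ⋂ i, {v : V | 0 < ⟪(⟪e i, x⟫ : ℝ) • e i, v⟫} := by
      ext v; simp [hC, real_inner_smul_left, Set.mem_iInter]
    rw [this]
    exact convex_iInter fun i => convex_halfSpace_gt (hlin _) 0
  have hCsub : C ⊆ arrComplement e := by
    intro v hv i h0
    have := hv i
    rw [h0, mul_zero] at this
    exact lt_irrefl 0 this
  have hxC : x ∈ C := fun i => mul_self_pos.mpr (hx i)
  apply Set.Subset.antisymm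
  · intro v hv i
    have hcont : Continuous fun w : V => ⟪e i, w⟫ := continuous_const.inner continuous_id
    have hS : IsPreconnected
        ((fun w : V => ⟪e i, w⟫) '' connectedComponentIn (arrComplement e) x) :=
      isPreconnected_connectedComponentIn.image _ hcont.continuousOn
    have h0S : (0 : ℝ) ∉ (fun w : V => ⟪e i, w⟫) '' connectedComponentIn (arrComplement e) x := by
      rintro ⟨w, hw, hw0⟩
      exact (connectedComponentIn_subset _ _ hw i) hw0
    have hxS : ⟪e i, x⟫ ∈ _ := Set.mem_image_of_mem _ (mem_connectedComponentIn hx)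
    have hvS : ⟪e i, v⟫ ∈ _ := Set.mem_image_of_mem (fun w : V => ⟪e i, w⟫) hv
    by_contra hle
    push_neg at hle
    have hxne : ⟪e i, x⟫ ≠ 0 := hx i
    have hvne : ⟪e i, v⟫ ≠ 0 := connectedComponentIn_subset _ _ hv i
    have hlt : ⟪e i, x⟫ * ⟪e i, v⟫ < 0 := lt_of_le_of_ne hle (mul_ne_zero hxne hvne)
    have hOC := hS.ordConnected
    rcases mul_neg_iff.mp hlt with ⟨hp, hn⟩ | ⟨hn, hp⟩
    · exact h0S (hOC.out hvS hxS ⟨hn.le, hp.le⟩)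
    · exact h0S (hOC.out hxS hvS ⟨hn.le, hp.le⟩)
  · exact hCconv.isPreconnected.subset_connectedComponentIn hxC hCsub

private lemma aux13_region_props {e : ι → V} {R : Set V} (hR : IsRegion e R) :
    Convex ℝ R ∧ (0 : V) ∈ R ∧ ∀ i, R ⊆ posHalf e i ∨ R ⊆ negHalf e i := by
  obtain ⟨x, hx, rfl⟩ := hR
  rw [aux13_comp_eq e hx]
  set C : Set V := {v | ∀ i, 0 < ⟪e i, x⟫ * ⟪e i, v⟫} with hC
  have hlin : ∀ u : V, IsLinearMap ℝ (fun v : V => ⟪u, v⟫) :=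
    fun u => ⟨fun a b => inner_add_right u a b, fun c a => real_inner_smul_right u a c⟩
  have hCconv : Convex ℝ C := by
    have : C = ⋂ i, {v : V | 0 < ⟪(⟪e i, x⟫ : ℝ) • e i, v⟫} := by
      ext v; simp [hC, real_inner_smul_left, Set.mem_iInter]
    rw [this]
    exact convex_iInter fun i => convex_halfSpace_gt (hlin _) 0
  refine ⟨hCconv.closure, ?_, ?_⟩
  · apply mem_closure_iff_seq_limit.mpr
    refine ⟨fun n : ℕ => (1 / (n + 1) : ℝ) • x, fun n i => ?_, ?_⟩
    · have ht : (0:ℝ) < 1 / (n + 1) := by positivity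
      rw [real_inner_smul_right]
      calc (0:ℝ) < (1 / (n + 1)) * (⟪e i, x⟫ * ⟪e i, x⟫) :=
            mul_pos ht (mul_self_pos.mpr (hx i))
        _ = ⟪e i, x⟫ * ((1 / (n + 1)) * ⟪e i, x⟫) := by ring
    · have := (tendsto_one_div_add_atTop_nhds_zero_nat : Filter.Tendsto (fun n : ℕ => 1 / ((n : ℝ) + 1)) Filter.atTop (nhds 0)).smul_const x
      simpa using this
  · intro i
    rcases (hx i).lt_or_gt with hneg | hpos
    · right
      have hclosed : IsClosed (negHalf e i) :=
        isClosed_le (continuous_const.inner continuous_id) continuous_const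
      apply closure_minimal _ hclosed
      intro v hv
      have : ⟪e i, v⟫ < 0 := by
        by_contra hge
        push_neg at hge
        nlinarith [hv i]
      exact this.le
    · left
      have hclosed : IsClosed (posHalf e i) :=
        isClosed_le continuous_const (continuous_const.inner continuous_id)
      apply closure_minimal _ hclosed
      intro v hv
      have : 0 < ⟪e i, v⟫ := by
        by_contra hge
        push_neg at hge
        nlinarith [hv i]
      exact this.le

private lemma aux13_face_props {e : ι → V} {F : Set V} (hF : IsFace e F) :
    Convex ℝ F ∧ (0 : V) ∈ F ∧ ∀ i, F ⊆ posHalf e i ∨ F ⊆ negHalf e i := by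
  obtain ⟨Rs, ⟨R0, hR0⟩, hreg, rfl⟩ := hF
  refine ⟨convex_sInter fun R hR => (aux13_region_props (hreg R hR)).1,
    Set.mem_sInter.mpr fun R hR => (aux13_region_props (hreg R hR)).2.1, fun i => ?_⟩
  have hsub : ⋂₀ Rs ⊆ R0 := Set.sInter_subset_of_mem hR0
  rcases (aux13_region_props (hreg R0 hR0)).2.2 i with h | h
  · exact Or.inl (hsub.trans h)
  · exact Or.inr (hsub.trans h)

set_option linter.unusedSectionVars false in
private lemma aux13_key_relint {F : Set V} {f : V →L[ℝ] ℝ} (hpos : ∀ w ∈ F, 0 ≤ f w)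
    {x₀ : V} (hx₀ : x₀ ∈ intrinsicInterior ℝ F) (h0 : f x₀ = 0) :
    ∀ y ∈ F, f y = 0 := by
  intro y hy
  obtain ⟨z, hz, rfl⟩ := hx₀
  rw [mem_interior_iff_mem_nhds, nhds_subtype_eq_comap, Filter.mem_comap] at hz
  obtain ⟨O, hO, hOF⟩ := hz
  have hyA : y ∈ affineSpan ℝ F := subset_affineSpan ℝ F hy
  have hzA : (z : V) ∈ affineSpan ℝ F := z.2
  have hcont : Filter.Tendsto (fun t : ℝ => t • ((z : V) - y) + (z : V)) (nhds 0)
      (nhds (z : V)) := by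
    have : Filter.Tendsto (fun t : ℝ => t • ((z : V) - y) + (z : V)) (nhds 0)
        (nhds ((0 : ℝ) • ((z : V) - y) + (z : V))) :=
      ((continuous_id.smul continuous_const).add continuous_const).tendsto 0
    simpa using this
  have hev : ∀ᶠ t : ℝ in nhdsWithin 0 (Set.Ioi 0),
      (fun t : ℝ => t • ((z : V) - y) + (z : V)) t ∈ O :=
    (hcont.mono_left nhdsWithin_le_nhds).eventually_mem hO
  have hevt : ∀ᶠ t : ℝ in nhdsWithin 0 (Set.Ioi 0), 0 < t := eventually_mem_nhdsWithin
  obtain ⟨t, htO, ht⟩ := (hev.and hevt).exists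
  set w := t • ((z : V) - y) + (z : V) with hw
  have hwA : w ∈ affineSpan ℝ F := by
    have := AffineSubspace.smul_vsub_vadd_mem (affineSpan ℝ F) t hzA hyA hzA
    simpa [vsub_eq_sub, vadd_eq_add] using this
  have hwF : w ∈ F := hOF (show (⟨w, hwA⟩ : affineSpan ℝ F) ∈ Subtype.val ⁻¹' O from htO)
  have hfw : f w = -t * f y := by
    simp [hw, map_add, map_smul, map_sub, h0]
  have := hpos w hwF
  rw [hfw] at this
  have hyle : f y ≤ 0 := by nlinarith
  exact le_antisymm hyle (hpos y hy)

private lemma aux13_tri {e : ι → V} {F : Set V} (hF : IsFace e F) (i : ι) :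
    (∀ x ∈ intrinsicInterior ℝ F, 0 < ⟪e i, x⟫) ∨
    (∀ x ∈ intrinsicInterior ℝ F, ⟪e i, x⟫ = 0) ∨
    (∀ x ∈ intrinsicInterior ℝ F, ⟪e i, x⟫ < 0) := by
  obtain ⟨hconv, h0F, hsides⟩ := aux13_face_props hF
  rcases hsides i with hp | hn
  · by_cases hz : ∃ x₀ ∈ intrinsicInterior ℝ F, ⟪e i, x₀⟫ = 0
    · obtain ⟨x₀, hx₀, h0⟩ := hz
      refine Or.inr (Or.inl fun x hx => ?_)
      exact aux13_key_relint (f := innerSL ℝ (e i)) (fun w hw => hp hw) hx₀ h0 x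
        (intrinsicInterior_subset hx)
    · push_neg at hz
      exact Or.inl fun x hx =>
        lt_of_le_of_ne (hp (intrinsicInterior_subset hx)) (Ne.symm (hz x hx))
  · by_cases hz : ∃ x₀ ∈ intrinsicInterior ℝ F, ⟪e i, x₀⟫ = 0
    · obtain ⟨x₀, hx₀, h0⟩ := hz
      refine Or.inr (Or.inl fun x hx => ?_)
      have := aux13_key_relint (f := -(innerSL ℝ (e i)))
        (fun w hw => by simpa [negHalf] using hn hw) hx₀ (by simpa using h0) x
        (intrinsicInterior_subset hx)
      simpa using this
    · push_neg at hz
      exact Or.inr (Or.inr fun x hx =>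
        lt_of_le_of_ne (hn (intrinsicInterior_subset hx)) (hz x hx))

section Aux13Chars

set_option linter.unusedSectionVars false

variable {e : ι → V} {F : Set V} (i : ι)
  (hne : (intrinsicInterior ℝ F).Nonempty)
  (tri : (∀ x ∈ intrinsicInterior ℝ F, 0 < ⟪e i, x⟫) ∨
    (∀ x ∈ intrinsicInterior ℝ F, ⟪e i, x⟫ = 0) ∨
    (∀ x ∈ intrinsicInterior ℝ F, ⟪e i, x⟫ < 0))

include hne tri

private lemma aux13_covec_vals :
    ((∀ x ∈ intrinsicInterior ℝ F, 0 < ⟪e i, x⟫) ∧ covec e F i = 1) ∨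
    ((∀ x ∈ intrinsicInterior ℝ F, ⟪e i, x⟫ = 0) ∧ covec e F i = 0) ∨
    ((∀ x ∈ intrinsicInterior ℝ F, ⟪e i, x⟫ < 0) ∧ covec e F i = -1) := by
  obtain ⟨x, hx⟩ := hne
  rcases tri with hP | hZ | hN
  · exact Or.inl ⟨hP, if_pos hP⟩
  · refine Or.inr (Or.inl ⟨hZ, ?_⟩)
    rw [covec, if_neg, if_neg]
    · intro h; exact absurd (hZ x hx) (h x hx).ne
    · intro h; exact absurd (hZ x hx) (h x hx).ne'
  · refine Or.inr (Or.inr ⟨hN, ?_⟩)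
    rw [covec, if_neg, if_pos hN]
    intro h; exact absurd (h x hx) (asymm (hN x hx))

private lemma aux13_mem_e : e i ∈ rootInv e F ↔ covec e F i ≠ 1 := by
  have hch : e i ∈ rootInv e F ↔ ¬ ∀ x ∈ intrinsicInterior ℝ F, 0 < ⟪e i, x⟫ := by
    constructor
    · rintro ⟨_, x, hx, hle⟩ hP
      rw [real_inner_comm] at hle
      exact absurd (hP x hx) (not_lt.mpr hle)
    · intro hP
      refine ⟨Or.inl ⟨i, rfl⟩, ?_⟩
      obtain ⟨x, hx⟩ := hne
      rcases tri with h | h | h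
      · exact absurd h hP
      · exact ⟨x, hx, by rw [real_inner_comm]; exact (h x hx).le⟩
      · exact ⟨x, hx, by rw [real_inner_comm]; exact (h x hx).le⟩
  rw [hch]
  constructor
  · intro hP h1
    rcases aux13_covec_vals i hne tri with ⟨hP', _⟩ | ⟨_, hc⟩ | ⟨_, hc⟩
    · exact hP hP'
    · rw [hc] at h1; exact absurd h1 (by decide)
    · rw [hc] at h1; exact absurd h1 (by decide)
  · intro h1 hP
    exact h1 (if_pos hP)

private lemma aux13_mem_neg_e : -(e i) ∈ rootInv e F ↔ covec e F i ≠ -1 := by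
  have hch : -(e i) ∈ rootInv e F ↔ ¬ ∀ x ∈ intrinsicInterior ℝ F, ⟪e i, x⟫ < 0 := by
    constructor
    · rintro ⟨_, x, hx, hle⟩ hN
      rw [inner_neg_right, real_inner_comm, neg_nonpos] at hle
      exact absurd (hN x hx) (not_lt.mpr hle)
    · intro hN
      refine ⟨Or.inr ⟨i, rfl⟩, ?_⟩
      obtain ⟨x, hx⟩ := hne
      refine ⟨x, hx, ?_⟩
      rw [inner_neg_right, real_inner_comm, neg_nonpos]
      rcases tri with h | h | h
      · exact (h x hx).le
      · exact (h x hx).ge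
      · exact absurd h hN
  rw [hch]
  constructor
  · intro hN h1
    rcases aux13_covec_vals i hne tri with ⟨_, hc⟩ | ⟨_, hc⟩ | ⟨hN', _⟩
    · rw [hc] at h1; exact absurd h1 (by decide)
    · rw [hc] at h1; exact absurd h1 (by decide)
    · exact hN hN'
  · intro h1 hN
    rcases aux13_covec_vals i hne tri with ⟨hP, _⟩ | ⟨hZ, _⟩ | ⟨_, hc⟩
    · obtain ⟨x, hx⟩ := hne
      exact absurd (hP x hx) (asymm (hN x hx))
    · obtain ⟨x, hx⟩ := hne
      exact absurd (hZ x hx) (hN x hx).ne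
    · exact h1 hc

end Aux13Chars

end Aux13

/-- The covector order is equivalent to the two root-inversion-set conditions. -/
theorem stmt13 (e : ι → V) (hne : ∀ i, e i ≠ 0) (B : Set V)
    (hB : IsRegion e B) (hBpos : ∀ i, B ⊆ posHalf e i)
    (F G : Set V) (hF : IsFace e F) (hG : IsFace e G) :
    ((∀ i, covec e G i ≤ covec e F i) ↔
      (rootInv e F \ rootInv e G ⊆ Set.range (fun i => -(e i)) ∧
        rootInv e G \ rootInv e F ⊆ Set.range e)) ∧
    ((∀ i, covec e G i ≤ covec e F i) ↔
      (rootInv e F ∩ Set.range e ⊆ rootInv e G ∩ Set.range e ∧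
        rootInv e G ∩ Set.range (fun i => -(e i)) ⊆
          rootInv e F ∩ Set.range (fun i => -(e i)))) := by
  classical
  obtain ⟨hFconv, hF0, _⟩ := aux13_face_props hF
  obtain ⟨hGconv, hG0, _⟩ := aux13_face_props hG
  have hneF : (intrinsicInterior ℝ F).Nonempty :=
    Set.Nonempty.intrinsicInterior hFconv ⟨0, hF0⟩
  have hneG : (intrinsicInterior ℝ G).Nonempty :=
    Set.Nonempty.intrinsicInterior hGconv ⟨0, hG0⟩
  have hmF : ∀ i, e i ∈ rootInv e F ↔ covec e F i ≠ 1 :=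
    fun i => aux13_mem_e i hneF (aux13_tri hF i)
  have hmG : ∀ i, e i ∈ rootInv e G ↔ covec e G i ≠ 1 :=
    fun i => aux13_mem_e i hneG (aux13_tri hG i)
  have hmF' : ∀ i, -(e i) ∈ rootInv e F ↔ covec e F i ≠ -1 :=
    fun i => aux13_mem_neg_e i hneF (aux13_tri hF i)
  have hmG' : ∀ i, -(e i) ∈ rootInv e G ↔ covec e G i ≠ -1 :=
    fun i => aux13_mem_neg_e i hneG (aux13_tri hG i)
  have hdisj : ∀ i j, e i ≠ -(e j) := by
    obtain ⟨x, hx, hBdef⟩ := hB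
    have hxB : x ∈ B := hBdef ▸ subset_closure (mem_connectedComponentIn hx)
    intro i j hij
    have h1 : 0 ≤ ⟪e i, x⟫ := hBpos i hxB
    have h2 : 0 ≤ ⟪e j, x⟫ := hBpos j hxB
    rw [hij, inner_neg_left, neg_nonneg] at h1
    exact hx j (le_antisymm h1 h2)
  have dec1 : ∀ a b : SignType, b ≤ a → a ≠ 1 → b ≠ 1 := by decide
  have dec2 : ∀ a b : SignType, b ≤ a → b ≠ -1 → a ≠ -1 := by decide
  have dec3 : ∀ a b : SignType, ¬ b ≤ a → (b = 1 ∧ a ≠ 1) ∨ (b ≠ -1 ∧ a = -1) := by decide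
  have dec4 : ∀ a b : SignType, (a ≠ 1 → b ≠ 1) → (b ≠ -1 → a ≠ -1) → b ≤ a := by decide
  constructor
  · constructor
    · intro h
      constructor
      · rintro v ⟨hvF, hvG⟩
        rcases hvF.1 with ⟨i, rfl⟩ | hr
        · exfalso
          have ha : covec e F i ≠ 1 := (hmF i).mp hvF
          have hb : covec e G i = 1 := by
            by_contra hb
            exact hvG ((hmG i).mpr hb)
          exact dec1 _ _ (h i) ha hb
        · exact hr
      · rintro v ⟨hvG, hvF⟩
        rcases hvG.1 with hr | ⟨i, rfl⟩
        · exact hr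
        · exfalso
          have hb : covec e G i ≠ -1 := (hmG' i).mp hvG
          have ha : covec e F i = -1 := by
            by_contra ha
            exact hvF ((hmF' i).mpr ha)
          exact dec2 _ _ (h i) hb ha
    · rintro ⟨h1, h2⟩ i
      by_contra hba
      rcases dec3 _ _ hba with ⟨hb1, ha1⟩ | ⟨hb1, ha1⟩
      · have hin : e i ∈ rootInv e F \ rootInv e G :=
          ⟨(hmF i).mpr ha1, fun hm => (hmG i).mp hm hb1⟩
        obtain ⟨j, hj⟩ := h1 hin
        exact hdisj i j hj.symm
      · have hin : -(e i) ∈ rootInv e G \ rootInv e F :=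
          ⟨(hmG' i).mpr hb1, fun hm => (hmF' i).mp hm ha1⟩
        obtain ⟨j, hj⟩ := h2 hin
        exact hdisj j i hj
  · constructor
    · intro h
      constructor
      · rintro v ⟨hvF, i, rfl⟩
        exact ⟨(hmG i).mpr (dec1 _ _ (h i) ((hmF i).mp hvF)), i, rfl⟩
      · rintro v ⟨hvG, i, rfl⟩
        exact ⟨(hmF' i).mpr (dec2 _ _ (h i) ((hmG' i).mp hvG)), i, rfl⟩
    · rintro ⟨h1, h2⟩ i
      refine dec4 _ _ (fun ha => ?_) (fun hb => ?_)
      · exact (hmG i).mp (h1 ⟨(hmF i).mpr ha, i, rfl⟩).1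
      · exact (hmF' i).mp (h2 ⟨(hmG' i).mpr hb, i, rfl⟩).1
end
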